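/- arXiv:math/9805153 — 10 statements merged into one kernel-verified Lean document; each statement's English description precedes it below -/
import Mathlib

section
/- The bracket on the free F-vector space with basis {⟨a,i⟩ : a ∈ ℤ, i ∈ ℤ} defined on basis elements by [⟨a,i⟩, ⟨b,j⟩] = (g(b) - g(a))·⟨a+b, i+j⟩ + (j - i)·⟨a+b, i+j-1⟩ is antisymmetric and satisfies the Jacobi identity, hence defines a Lie algebra W(g,1). -/
/-- The bracket on the free `F`-vector space with basis `{⟨a,i⟩ : a i : ℤ}`, defined
on basis elements by `[⟨a,i⟩,⟨b,j⟩] = (g b - g a)•⟨a+b,i+j⟩ + (j-i)•⟨a+b,i+j-1⟩`. -/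
noncomputable def wittBracket (F : Type*) [Field F] (g : ℤ →+ F)
    (x y : (ℤ × ℤ) →₀ F) : (ℤ × ℤ) →₀ F :=
  x.sum fun p c => y.sum fun q d =>
    (c * d) • ((g q.1 - g p.1) • Finsupp.single (p.1 + q.1, p.2 + q.2) (1 : F)
      + ((q.2 - p.2 : ℤ) : F) • Finsupp.single (p.1 + q.1, p.2 + q.2 - 1) (1 : F))

namespace WBaux

variable {F : Type*} [Field F] (g : ℤ →+ F)

/-- The bracket value on a pair of basis indices. -/
noncomputable def v (p q : ℤ × ℤ) : (ℤ × ℤ) →₀ F :=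
  (g q.1 - g p.1) • Finsupp.single (p.1 + q.1, p.2 + q.2) (1 : F)
    + ((q.2 - p.2 : ℤ) : F) • Finsupp.single (p.1 + q.1, p.2 + q.2 - 1) (1 : F)

lemma wb_def (x y : (ℤ × ℤ) →₀ F) :
    wittBracket F g x y = x.sum fun p c => y.sum fun q d => (c * d) • v g p q := rfl

lemma wb_zero_left (y : (ℤ × ℤ) →₀ F) : wittBracket F g 0 y = 0 := by
  simp [wb_def]

lemma wb_zero_right (x : (ℤ × ℤ) →₀ F) : wittBracket F g x 0 = 0 := by
  simp [wb_def]

lemma wb_add_left (x₁ x₂ y : (ℤ × ℤ) →₀ F) :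
    wittBracket F g (x₁ + x₂) y = wittBracket F g x₁ y + wittBracket F g x₂ y := by
  simp only [wb_def]
  rw [Finsupp.sum_add_index']
  · intro p; simp
  · intro p c₁ c₂
    rw [← Finsupp.sum_add]
    apply Finsupp.sum_congr
    intro q _
    rw [add_mul, add_smul]

lemma wb_add_right (x y₁ y₂ : (ℤ × ℤ) →₀ F) :
    wittBracket F g x (y₁ + y₂) = wittBracket F g x y₁ + wittBracket F g x y₂ := by
  simp only [wb_def]
  rw [← Finsupp.sum_add]
  apply Finsupp.sum_congr
  intro p _
  rw [Finsupp.sum_add_index']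
  · intro q; simp
  · intro q d₁ d₂; rw [mul_add, add_smul]

lemma wb_smul_left (c : F) (x y : (ℤ × ℤ) →₀ F) :
    wittBracket F g (c • x) y = c • wittBracket F g x y := by
  simp only [wb_def]
  rw [Finsupp.sum_smul_index, Finsupp.smul_sum]
  · apply Finsupp.sum_congr
    intro p _
    rw [Finsupp.smul_sum]
    apply Finsupp.sum_congr
    intro q _
    rw [mul_assoc, mul_smul]
  · intro p; simp

lemma wb_smul_right (c : F) (x y : (ℤ × ℤ) →₀ F) :
    wittBracket F g x (c • y) = c • wittBracket F g x y := by
  simp only [wb_def]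
  rw [Finsupp.smul_sum]
  apply Finsupp.sum_congr
  intro p _
  rw [Finsupp.sum_smul_index, Finsupp.smul_sum]
  · apply Finsupp.sum_congr
    intro q _
    rw [mul_left_comm, mul_smul]
  · intro q; simp

lemma wb_single_single (p q : ℤ × ℤ) (c d : F) :
    wittBracket F g (Finsupp.single p c) (Finsupp.single q d) = (c * d) • v g p q := by
  rw [wb_def, Finsupp.sum_single_index, Finsupp.sum_single_index]
  · simp
  · simp [Finsupp.sum_single_index]

lemma wb_anti (x y : (ℤ × ℤ) →₀ F) : wittBracket F g x y = - wittBracket F g y x := by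
  induction x using Finsupp.induction_linear with
  | zero => simp [wb_zero_left, wb_zero_right]
  | add f h hf hh => rw [wb_add_left, wb_add_right, hf, hh, neg_add]
  | single p c =>
    induction y using Finsupp.induction_linear with
    | zero => simp [wb_zero_left, wb_zero_right]
    | add f h hf hh => rw [wb_add_left, wb_add_right, hf, hh, neg_add]
    | single q d =>
      rw [wb_single_single, wb_single_single, ← smul_neg, mul_comm]
      congr 1
      simp only [v, neg_add]
      rw [add_comm q.1 p.1, add_comm q.2 p.2]
      push_cast
      module

lemma wb_jacobi_single (p q r : ℤ × ℤ) :
    wittBracket F g (Finsupp.single p (1:F))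
        (wittBracket F g (Finsupp.single q 1) (Finsupp.single r 1))
      + wittBracket F g (Finsupp.single q 1)
        (wittBracket F g (Finsupp.single r 1) (Finsupp.single p 1))
      + wittBracket F g (Finsupp.single r 1)
        (wittBracket F g (Finsupp.single p 1) (Finsupp.single q 1)) = 0 := by
  obtain ⟨a, i⟩ := p
  obtain ⟨b, j⟩ := q
  obtain ⟨c, k⟩ := r
  simp only [wb_single_single, one_mul, one_smul, v, wb_add_right, wb_smul_right,
    wb_single_single, one_mul, one_smul]
  have ha2 : b+(c+a)=a+(b+c) := by ring
  have ha3 : c+(a+b)=a+(b+c) := by ring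
  have h1 : i+(j+k-1) = i+(j+k)-1 := by ring
  have h2 : j+(k+i) = i+(j+k) := by ring
  have h3 : j+(k+i-1) = i+(j+k)-1 := by ring
  have h4 : k+(i+j) = i+(j+k) := by ring
  have h5 : k+(i+j-1) = i+(j+k)-1 := by ring
  have h6 : i+(j+k)-1-1 = i+(j+k)-2 := by ring
  simp only [map_add, ha2, ha3, h1, h2, h3, h4, h5]
  simp only [h6]
  push_cast
  module

lemma wb_jacobi (x y z : (ℤ × ℤ) →₀ F) :
    wittBracket F g x (wittBracket F g y z) + wittBracket F g y (wittBracket F g z x)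
      + wittBracket F g z (wittBracket F g x y) = 0 := by
  induction x using Finsupp.induction_linear with
  | zero => simp [wb_zero_left, wb_zero_right]
  | add f h hf hh =>
    simp only [wb_add_left, wb_add_right]
    linear_combination (norm := abel) hf + hh
  | single p c =>
    induction y using Finsupp.induction_linear with
    | zero => simp [wb_zero_left, wb_zero_right]
    | add f h hf hh =>
      simp only [wb_add_left, wb_add_right]
      linear_combination (norm := abel) hf + hh
    | single q d =>
      induction z using Finsupp.induction_linear with
      | zero => simp [wb_zero_left, wb_zero_right]
      | add f h hf hh =>
        simp only [wb_add_left, wb_add_right]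
        linear_combination (norm := abel) hf + hh
      | single r e =>
        have base := wb_jacobi_single g p q r
        have hp : Finsupp.single p c = c • Finsupp.single p (1:F) := by simp
        have hq : Finsupp.single q d = d • Finsupp.single q (1:F) := by simp
        have hr : Finsupp.single r e = e • Finsupp.single r (1:F) := by simp
        rw [hp, hq, hr]
        have goal2 : (c * (d * e)) •
            (wittBracket F g (Finsupp.single p (1:F))
                (wittBracket F g (Finsupp.single q 1) (Finsupp.single r 1))
              + wittBracket F g (Finsupp.single q 1)
                (wittBracket F g (Finsupp.single r 1) (Finsupp.single p 1))
              + wittBracket F g (Finsupp.single r 1)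
                (wittBracket F g (Finsupp.single p 1) (Finsupp.single q 1))) = 0 := by
          rw [base, smul_zero]
        rw [← goal2]
        simp only [wb_smul_left, wb_smul_right, smul_smul, smul_add]
        module

end WBaux

theorem wittBracket_lieRing (F : Type*) [Field F] [CharZero F] (g : ℤ →+ F) :
    (∀ x y : (ℤ × ℤ) →₀ F, wittBracket F g x y = - wittBracket F g y x) ∧
    (∀ x y z : (ℤ × ℤ) →₀ F,
      wittBracket F g x (wittBracket F g y z)
        + wittBracket F g y (wittBracket F g z x)
        + wittBracket F g z (wittBracket F g x y) = 0) ∧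
    (∀ x₁ x₂ y : (ℤ × ℤ) →₀ F,
      wittBracket F g (x₁ + x₂) y = wittBracket F g x₁ y + wittBracket F g x₂ y) ∧
    (∀ (c : F) (x y : (ℤ × ℤ) →₀ F),
      wittBracket F g (c • x) y = c • wittBracket F g x y) := by
  exact ⟨WBaux.wb_anti g, WBaux.wb_jacobi g, WBaux.wb_add_left g, WBaux.wb_smul_left g⟩
end

section
/- If g : ℤ → F is additive and injective, then the Lie algebra W(g,1) is simple: it is nonabelian and its only ideals are 0 and W(g,1). -/
section WAux

variable {F : Type*} [Field F] [CharZero F] (g : ℤ →+ F) (hg : Function.Injective g)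
    {W : Type*} [LieRing W] [LieAlgebra F W] (E : Module.Basis (ℤ × ℤ) F W)
    (hbr : ∀ a i b j : ℤ, ⁅E (a, i), E (b, j)⁆ =
      (g b - g a) • E (a + b, i + j) + ((j - i : ℤ) : F) • E (a + b, i + j - 1))

include hbr in
lemma W_brep (c k : ℤ) (v : W) (a m : ℤ) :
    E.repr ⁅E (c, k), v⁆ (a, m)
      = (g (a - c) - g c) * E.repr v (a - c, m - k)
        + ((m + 1 - 2*k : ℤ) : F) * E.repr v (a - c, m + 1 - k) := by
  have hv : v ∈ Submodule.span F (Set.range E) := by rw [E.span_eq]; trivial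
  induction hv using Submodule.span_induction with
  | mem x hx =>
      obtain ⟨⟨b, j⟩, rfl⟩ := hx
      rw [hbr c k b j]
      simp only [map_add, map_smul, E.repr_self, Finsupp.add_apply, Finsupp.smul_apply,
        Finsupp.single_apply, smul_eq_mul, Prod.mk.injEq]
      split_ifs <;> (try (exfalso; omega)) <;> push_cast <;> ring_nf <;>
        first
          | rfl
          | (rw [show b = a - c from by omega]; ring)
          | (have hcast : (j : F) = (m : F) + 1 - (k : F) := by
               exact_mod_cast congrArg (fun z : ℤ => (z : F)) (show j = m + 1 - k by omega)
             linear_combination hcast)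
  | zero => simp
  | add x y _ _ hx hy => simp only [lie_add, map_add, Finsupp.add_apply, hx, hy]; ring
  | smul r x _ hx =>
      simp only [lie_smul, map_smul, Finsupp.smul_apply, hx, smul_eq_mul]; ring

include hg hbr in
lemma W_gen_all (I : LieIdeal F W) (d i : ℤ) (hdi : E (d, i) ∈ I) (e t : ℤ) :
    E (e, t) ∈ I := by
  have g0 : g 0 = 0 := map_zero g
  have hA : ∀ e : ℤ, e ≠ 2*d → E (e, 2*i) ∈ I := by
    intro e he
    have hb := hbr (e - d) i d i
    rw [show e - d + d = e from by ring, show i + i = 2*i from by ring, sub_self,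
      Int.cast_zero, zero_smul, add_zero] at hb
    have hmem : ⁅E (e - d, i), E (d, i)⁆ ∈ I := lie_mem_right F W I _ _ hdi
    rw [hb] at hmem
    have hne : g d - g (e - d) ≠ 0 := by
      rw [sub_ne_zero]
      intro h
      exact he (by have := hg h; omega)
    have h2 := I.smul_mem (g d - g (e - d))⁻¹ hmem
    rwa [smul_smul, inv_mul_cancel₀ hne, one_smul] at h2
  have h1 : E (2*d+1, 2*i) ∈ I := hA _ (by omega)
  have h2 : E (2*d+2, 2*i) ∈ I := hA _ (by omega)
  set k := t - 2*i with hk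
  have hb1 := hbr (e - (2*d+1)) k (2*d+1) (2*i)
  have hb2 := hbr (e - (2*d+2)) k (2*d+2) (2*i)
  rw [show e - (2*d+1) + (2*d+1) = e from by ring, show k + 2*i = t from by omega] at hb1
  rw [show e - (2*d+2) + (2*d+2) = e from by ring, show k + 2*i = t from by omega] at hb2
  have u1 : ⁅E (e - (2*d+1), k), E (2*d+1, 2*i)⁆ ∈ I := lie_mem_right F W I _ _ h1
  have u2 : ⁅E (e - (2*d+2), k), E (2*d+2, 2*i)⁆ ∈ I := lie_mem_right F W I _ _ h2
  rw [hb1] at u1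
  rw [hb2] at u2
  have hdiff := I.sub_mem u1 u2
  have key : (g (2*d+1) - g (e - (2*d+1))) • E (e, t) + ((2*i - k : ℤ) : F) • E (e, t - 1)
      - ((g (2*d+2) - g (e - (2*d+2))) • E (e, t) + ((2*i - k : ℤ) : F) • E (e, t - 1))
      = ((g (2*d+1) - g (e - (2*d+1))) - (g (2*d+2) - g (e - (2*d+2)))) • E (e, t) := by
    rw [add_sub_add_right_eq_sub, ← sub_smul]
  rw [key] at hdiff
  have hDelta : (g (2*d+1) - g (e - (2*d+1))) - (g (2*d+2) - g (e - (2*d+2))) = g (-2) := by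
    rw [← map_sub g, ← map_sub g, ← map_sub g]
    congr 1
    ring
  rw [hDelta] at hdiff
  have hne : g (-2) ≠ 0 := by
    intro h
    have : (-2 : ℤ) = 0 := hg (by rw [h, g0])
    omega
  have h3 := I.smul_mem (g (-2))⁻¹ hdiff
  rwa [smul_smul, inv_mul_cancel₀ hne, one_smul] at h3

include hg hbr in
lemma W_phase3 (I : LieIdeal F W) :
    ∀ n : ℕ, ∀ u : W, u ∈ I → u ≠ 0 →
      (∀ p q : ℤ × ℤ, E.repr u p ≠ 0 → E.repr u q ≠ 0 → p.1 = q.1) →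
      (E.repr u).support.card ≤ n → ∃ d i : ℤ, E (d, i) ∈ I := by
  intro n
  induction n with
  | zero =>
      intro u hu hne _ hcard
      exfalso
      apply hne
      have h0 : (E.repr u).support = ∅ :=
        Finset.card_eq_zero.mp (Nat.le_antisymm hcard (Nat.zero_le _))
      have : E.repr u = 0 := Finsupp.support_eq_empty.mp h0
      exact (LinearEquiv.map_eq_zero_iff E.repr).mp this
  | succ n ih =>
      intro u hu hne hsame hcard
      have hrne : E.repr u ≠ 0 := fun h => hne ((LinearEquiv.map_eq_zero_iff E.repr).mp h)
      obtain ⟨⟨b, k⟩, hbk⟩ := Finsupp.support_nonempty_iff.mpr hrne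
      have hbk' : E.repr u (b, k) ≠ 0 := Finsupp.mem_support_iff.mp hbk
      by_cases hsingle : ∀ p : ℤ × ℤ, E.repr u p ≠ 0 → p = (b, k)
      · refine ⟨b, k, ?_⟩
        obtain ⟨cv, hcv⟩ : ∃ cv : F, cv = E.repr u (b, k) := ⟨_, rfl⟩
        have hcvne : cv ≠ 0 := by rw [hcv]; exact hbk'
        have hrepr : E.repr u = Finsupp.single (b, k) cv := by
          ext p
          by_cases hp : p = (b, k)
          · subst hp; rw [Finsupp.single_eq_same, hcv]
          · rw [Finsupp.single_apply, if_neg (fun h => hp h.symm)]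
            by_contra h
            exact hp (hsingle p h)
        have hu_eq : u = cv • E (b, k) := by
          apply E.repr.injective
          rw [map_smul, E.repr_self, hrepr, Finsupp.smul_single', mul_one]
        have hmem := I.smul_mem cv⁻¹ hu
        rw [hu_eq, smul_smul, inv_mul_cancel₀ hcvne, one_smul] at hmem
        exact hmem
      · push_neg at hsingle
        obtain ⟨⟨b0, j'⟩, hp0, hp0ne⟩ := hsingle
        have hb0 : b0 = b := hsame (b0, j') (b, k) hp0 hbk'
        subst hb0
        have hj' : j' ≠ k := fun h => hp0ne (by rw [h])
        set w := ⁅E (b0, k), u⁆ with hw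
        have hwI : w ∈ I := lie_mem_right F W I _ _ hu
        have hwcoord : ∀ a m : ℤ, E.repr w (a, m)
            = (g (a - b0) - g b0) * E.repr u (a - b0, m - k)
              + ((m + 1 - 2*k : ℤ) : F) * E.repr u (a - b0, m + 1 - k) :=
          fun a m => W_brep g E hbr b0 k u a m
        have hw2 : ∀ a m : ℤ, E.repr w (a, m) ≠ 0 →
            a = 2*b0 ∧ E.repr u (b0, m + 1 - k) ≠ 0 ∧ m + 1 - 2*k ≠ 0 := by
          intro a m hne0
          rw [hwcoord] at hne0
          have hfst : a - b0 = b0 := by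
            by_cases h1 : E.repr u (a - b0, m - k) = 0
            · by_cases h2 : E.repr u (a - b0, m + 1 - k) = 0
              · exfalso; rw [h1, h2, mul_zero, mul_zero, add_zero] at hne0; exact hne0 rfl
              · exact hsame _ (b0, k) h2 hbk'
            · exact hsame _ (b0, k) h1 hbk'
          rw [hfst, sub_self, zero_mul, zero_add] at hne0
          refine ⟨by omega, fun h => hne0 (by rw [h, mul_zero]),
            fun h => hne0 (by rw [h]; simp)⟩
        have hwit : E.repr w (2*b0, k + j' - 1) ≠ 0 := by
          rw [hwcoord]
          rw [show 2*b0 - b0 = b0 from by ring, show k + j' - 1 + 1 - k = j' from by ring,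
            sub_self, zero_mul, zero_add]
          apply mul_ne_zero
          · exact_mod_cast Int.cast_ne_zero.mpr (show (k + j' - 1 + 1 - 2*k : ℤ) ≠ 0 by omega)
          · exact hp0
        have hwne : w ≠ 0 := fun h => hwit (by simp [h])
        have hsub : (E.repr w).support
            ⊆ ((E.repr u).support.erase (b0, k)).image (fun p => (2*b0, k + p.2 - 1)) := by
          intro q hq
          obtain ⟨a, m⟩ := q
          have hne0 := Finsupp.mem_support_iff.mp hq
          obtain ⟨ha, hu', hcoef⟩ := hw2 a m hne0
          refine Finset.mem_image.mpr ⟨(b0, m + 1 - k), ?_, ?_⟩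
          · refine Finset.mem_erase.mpr ⟨?_, Finsupp.mem_support_iff.mpr hu'⟩
            simp only [ne_eq, Prod.mk.injEq, not_and]
            intro _ h
            omega
          · simp only [Prod.mk.injEq]
            constructor
            · omega
            · omega
        have hcard' : (E.repr w).support.card ≤ n := by
          have c1 := Finset.card_le_card hsub
          have c2 := Finset.card_image_le
            (s := (E.repr u).support.erase (b0, k)) (f := fun p : ℤ × ℤ => (2*b0, k + p.2 - 1))
          have c3 := Finset.card_erase_of_mem hbk
          omega
        refine ih w hwI hwne ?_ hcard'
        intro p q hp hq
        obtain ⟨a1, m1⟩ := p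
        obtain ⟨a2, m2⟩ := q
        rw [(hw2 _ _ hp).1, (hw2 _ _ hq).1]

include hg hbr in
lemma W_phase2 (I : LieIdeal F W) :
    ∀ n : ℕ, ∀ Bs : Finset ℤ, Bs.card ≤ n → ∀ u : W, u ∈ I →
      ∀ b1 M1 : ℤ, E.repr u (b1, M1) ≠ 0 → (∀ j, M1 < j → E.repr u (b1, j) = 0) →
      (∀ p : ℤ × ℤ, E.repr u p ≠ 0 → p.1 ∈ Bs) →
      (∀ p : ℤ × ℤ, E.repr u p ≠ 0 → 0 ≤ p.2) →
      ∃ w : W, w ∈ I ∧ w ≠ 0 ∧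
        (∀ p q : ℤ × ℤ, E.repr w p ≠ 0 → E.repr w q ≠ 0 → p.1 = q.1) := by
  intro n
  induction n with
  | zero =>
      intro Bs hBscard u _ b1 M1 hwit _ hBs _
      exfalso
      have h1 := hBs (b1, M1) hwit
      have h2 : Bs = ∅ := Finset.card_eq_zero.mp (Nat.le_antisymm hBscard (Nat.zero_le _))
      rw [h2] at h1
      exact absurd h1 (Finset.notMem_empty _)
  | succ n ih =>
      intro Bs hBscard u hu b1 M1 hwit htop hBs hpos
      by_cases hall : ∀ p : ℤ × ℤ, E.repr u p ≠ 0 → p.1 = b1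
      · exact ⟨u, hu, fun h => hwit (by simp [h]),
          fun p q hp hq => (hall p hp).trans (hall q hq).symm⟩
      push_neg at hall
      obtain ⟨p0, hp0, hp0fst⟩ := hall
      set b2 := p0.1 with hb2def
      have hb2Bs : b2 ∈ Bs := hBs p0 hp0
      have hb1Bs : b1 ∈ Bs := hBs (b1, M1) hwit
      have hgne : g b1 - g b2 ≠ 0 := sub_ne_zero.mpr (fun h => hp0fst (hg h).symm)
      -- global snd bound
      obtain ⟨M2, hM2pos, hM2⟩ : ∃ M2 : ℤ, 0 ≤ M2 ∧
          ∀ p : ℤ × ℤ, E.repr u p ≠ 0 → p.2 ≤ M2 := by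
        classical
        set s := insert (0 : ℤ) ((E.repr u).support.image Prod.snd) with hs
        refine ⟨s.max' ⟨0, Finset.mem_insert_self _ _⟩,
          Finset.le_max' _ _ (Finset.mem_insert_self _ _), ?_⟩
        intro p hp
        exact Finset.le_max' _ _ (Finset.mem_insert_of_mem
          (Finset.mem_image.mpr ⟨p, Finsupp.mem_support_iff.mpr hp, rfl⟩))
      -- the killing loop
      have loop : ∀ t : ℕ, ∃ v : W, v ∈ I ∧
          (∀ p : ℤ × ℤ, E.repr v p ≠ 0 → p.1 ∈ Bs ∧ 0 ≤ p.2 ∧ p.2 ≤ M2) ∧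
          E.repr v (b1, M1) = (g b1 - g b2)^t * E.repr u (b1, M1) ∧
          (∀ j, M1 < j → E.repr v (b1, j) = 0) ∧
          (∀ j, M2 - (t : ℤ) < j → E.repr v (b2, j) = 0) := by
        intro t
        induction t with
        | zero =>
            refine ⟨u, hu, fun p hp => ⟨hBs p hp, hpos p hp, hM2 p hp⟩, by simp, htop, ?_⟩
            intro j hj
            by_contra h
            have := hM2 (b2, j) h
            simp at this
            omega
        | succ t iht =>
            obtain ⟨v, hvI, hvsupp, hvwit, hvtop, hvb2⟩ := iht
            have coord : ∀ a m : ℤ, E.repr (⁅E (0, 0), v⁆ - g b2 • v) (a, m)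
                = (g a - g b2) * E.repr v (a, m) + ((m + 1 : ℤ) : F) * E.repr v (a, m + 1) := by
              intro a m
              rw [map_sub, Finsupp.sub_apply, map_smul, Finsupp.smul_apply,
                W_brep g E hbr 0 0 v a m]
              simp only [sub_zero, map_zero, mul_zero, smul_eq_mul]
              ring
            refine ⟨⁅E (0, 0), v⁆ - g b2 • v,
              I.sub_mem (lie_mem_right F W I _ _ hvI) (I.smul_mem _ hvI), ?_, ?_, ?_, ?_⟩
            · intro p hp
              obtain ⟨a, m⟩ := p
              rw [coord] at hp
              by_cases h1 : E.repr v (a, m) = 0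
              · rw [h1, mul_zero, zero_add] at hp
                have h2 : E.repr v (a, m + 1) ≠ 0 := fun h => hp (by rw [h, mul_zero])
                have h3 : ((m + 1 : ℤ) : F) ≠ 0 := fun h => hp (by rw [h, zero_mul])
                have h4 : (m + 1 : ℤ) ≠ 0 := fun h => h3 (by rw [h]; simp)
                obtain ⟨ha, hb, hc⟩ := hvsupp (a, m + 1) h2
                exact ⟨ha, by simp at hb ⊢; omega, by simp at hc ⊢; omega⟩
              · obtain ⟨ha, hb, hc⟩ := hvsupp (a, m) h1
                exact ⟨ha, hb, hc⟩
            · rw [coord, hvtop (M1 + 1) (by omega), mul_zero, add_zero, hvwit, pow_succ]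
              ring
            · intro j hj
              rw [coord, hvtop j hj, hvtop (j + 1) (by omega), mul_zero, mul_zero, add_zero]
            · intro j hj
              rw [coord, sub_self, zero_mul, zero_add,
                hvb2 (j + 1) (by push_cast at hj ⊢; omega), mul_zero]
      -- use the loop
      obtain ⟨v, hvI, hvsupp, hvwit, hvtop, hvb2⟩ := loop (M2 + 1).toNat
      have hKz : (((M2 + 1).toNat : ℕ) : ℤ) = M2 + 1 := Int.toNat_of_nonneg (by omega)
      have hb2gone : ∀ j : ℤ, E.repr v (b2, j) = 0 := by
        intro j
        by_cases h0 : 0 ≤ j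
        · exact hvb2 j (by omega)
        · by_contra h
          have := (hvsupp (b2, j) h).2.1
          simp at this
          omega
      have hvwitne : E.repr v (b1, M1) ≠ 0 := by
        rw [hvwit]
        exact mul_ne_zero (pow_ne_zero _ hgne) hwit
      have hcard' : (Bs.erase b2).card ≤ n := by
        have := Finset.card_erase_of_mem hb2Bs
        omega
      refine ih (Bs.erase b2) hcard' v hvI b1 M1 hvwitne hvtop ?_
        (fun p hp => (hvsupp p hp).2.1)
      intro p hp
      refine Finset.mem_erase.mpr ⟨?_, (hvsupp p hp).1⟩
      intro h
      apply hp
      have : p = (b2, p.2) := by rw [← h]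
      rw [this] at hp ⊢
      exact hb2gone p.2

end WAux

theorem W_g1_simple (F : Type*) [Field F] [CharZero F] (g : ℤ →+ F)
    (hg : Function.Injective g)
    (W : Type*) [LieRing W] [LieAlgebra F W] (E : Module.Basis (ℤ × ℤ) F W)
    (hbr : ∀ a i b j : ℤ, ⁅E (a, i), E (b, j)⁆ =
      (g b - g a) • E (a + b, i + j) + ((j - i : ℤ) : F) • E (a + b, i + j - 1)) :
    LieAlgebra.IsSimple F W := by
  classical
  constructor
  · intro I
    by_cases hbot : I = ⊥
    · exact Or.inl hbot
    right
    have hex : ∃ x, x ∈ I ∧ x ≠ 0 := by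
      by_contra h
      push_neg at h
      exact hbot ((LieSubmodule.eq_bot_iff I).mpr h)
    obtain ⟨x, hxI, hxne⟩ := hex
    have hrne : E.repr x ≠ 0 := fun h => hxne ((LinearEquiv.map_eq_zero_iff E.repr).mp h)
    have hsupp : (E.repr x).support.Nonempty := Finsupp.support_nonempty_iff.mpr hrne
    set s2 : Finset ℤ := (E.repr x).support.image Prod.snd with hs2
    have hs2ne : s2.Nonempty := hsupp.image _
    set m0 := s2.min' hs2ne with hm0
    set M := s2.max' hs2ne with hM
    obtain ⟨c, hc⟩ := Infinite.exists_notMem_finset ((E.repr x).support.image Prod.fst)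
    set k : ℤ := 1 - m0 with hk
    set y : W := ⁅E (c, k), x⁆ with hy
    have hyI : y ∈ I := lie_mem_right F W I _ _ hxI
    have ycoord : ∀ a m : ℤ, E.repr y (a, m)
        = (g (a - c) - g c) * E.repr x (a - c, m - k)
          + ((m + 1 - 2*k : ℤ) : F) * E.repr x (a - c, m + 1 - k) :=
      fun a m => W_brep g E hbr c k x a m
    have hb1 : ∀ b j : ℤ, E.repr x (b, j) ≠ 0 → m0 ≤ j := by
      intro b j h
      exact s2.min'_le j (Finset.mem_image.mpr ⟨(b, j), Finsupp.mem_support_iff.mpr h, rfl⟩)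
    have hypos : ∀ p : ℤ × ℤ, E.repr y p ≠ 0 → 0 ≤ p.2 := by
      intro p hp
      obtain ⟨a, m⟩ := p
      show (0 : ℤ) ≤ m
      rw [ycoord] at hp
      by_cases h1 : E.repr x (a - c, m - k) = 0
      · rw [h1, mul_zero, zero_add] at hp
        have h2 : E.repr x (a - c, m + 1 - k) ≠ 0 := fun h => hp (by rw [h, mul_zero])
        have := hb1 _ _ h2
        omega
      · have := hb1 _ _ h1
        omega
    have hxtop : ∀ j : ℤ, M < j → ∀ b : ℤ, E.repr x (b, j) = 0 := by
      intro j hj b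
      by_contra h
      have hmem : j ∈ s2 := Finset.mem_image.mpr ⟨(b, j), Finsupp.mem_support_iff.mpr h, rfl⟩
      have := s2.le_max' j hmem
      omega
    obtain ⟨⟨b0, M'⟩, hb0supp, hb0eq⟩ := Finset.mem_image.mp (s2.max'_mem hs2ne)
    have hM' : M' = M := hb0eq
    subst hM'
    have hwitx : E.repr x (b0, M) ≠ 0 := Finsupp.mem_support_iff.mp hb0supp
    have hywit : E.repr y (c + b0, k + M) ≠ 0 := by
      rw [ycoord]
      rw [show c + b0 - c = b0 from by ring, show k + M - k = M from by ring,
        show k + M + 1 - k = M + 1 from by ring]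
      rw [hxtop (M + 1) (by omega) b0, mul_zero, add_zero]
      apply mul_ne_zero
      · rw [sub_ne_zero]
        intro h
        have hb0c : b0 = c := hg h
        apply hc
        rw [← hb0c]
        exact Finset.mem_image.mpr ⟨(b0, M), hb0supp, rfl⟩
      · exact hwitx
    have hyne : y ≠ 0 := fun h => hywit (by simp [h])
    have hyrne : E.repr y ≠ 0 := fun h => hyne ((LinearEquiv.map_eq_zero_iff E.repr).mp h)
    have hsyne : (E.repr y).support.Nonempty := Finsupp.support_nonempty_iff.mpr hyrne
    set ty : Finset ℤ := (E.repr y).support.image Prod.snd with hty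
    have htyne : ty.Nonempty := hsyne.image _
    obtain ⟨⟨b1, My'⟩, hb1supp, hb1eq⟩ := Finset.mem_image.mp (ty.max'_mem htyne)
    have hywit2 : E.repr y (b1, My') ≠ 0 := Finsupp.mem_support_iff.mp hb1supp
    have hytop : ∀ j : ℤ, My' < j → E.repr y (b1, j) = 0 := by
      intro j hj
      by_contra h
      have hmem : j ∈ ty := Finset.mem_image.mpr ⟨(b1, j), Finsupp.mem_support_iff.mpr h, rfl⟩
      have := ty.le_max' j hmem
      rw [← hb1eq] at this
      omega
    have hyBs : ∀ p : ℤ × ℤ, E.repr y p ≠ 0 →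
        p.1 ∈ (E.repr y).support.image Prod.fst := by
      intro p hp
      exact Finset.mem_image.mpr ⟨p, Finsupp.mem_support_iff.mpr hp, rfl⟩
    obtain ⟨w, hwI, hwne, hwsame⟩ := W_phase2 g hg E hbr I
      ((E.repr y).support.image Prod.fst).card ((E.repr y).support.image Prod.fst) le_rfl
      y hyI b1 My' hywit2 hytop hyBs hypos
    obtain ⟨d, i, hdi⟩ := W_phase3 g hg E hbr I (E.repr w).support.card w hwI hwne hwsame le_rfl
    have hall : ∀ e t : ℤ, E (e, t) ∈ I := fun e t => W_gen_all g hg E hbr I d i hdi e t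
    rw [eq_top_iff]
    intro z hzt
    clear hzt
    have hz : z ∈ Submodule.span F (Set.range E) := by rw [E.span_eq]; trivial
    induction hz using Submodule.span_induction with
    | mem v hv => obtain ⟨⟨e, t⟩, rfl⟩ := hv; exact hall e t
    | zero => exact I.zero_mem
    | add v1 v2 _ _ h1 h2 => exact I.add_mem h1 h2
    | smul r v _ h1 => exact I.smul_mem r h1
  · intro habel
    have h0 : ⁅E (0, 0), E (1, 0)⁆ = 0 := trivial_lie_zero W W _ _
    rw [hbr 0 0 1 0] at h0
    simp only [map_zero, sub_zero, Int.cast_zero, zero_smul, add_zero, zero_add] at h0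
    rw [smul_eq_zero] at h0
    rcases h0 with h0 | h0
    · exact hg.ne (show (1 : ℤ) ≠ 0 by norm_num) (by rw [h0, map_zero])
    · exact Module.Basis.ne_zero E (1, 0) h0
end

section
/- If a nonzero ideal I of W(g,1) (with g additive and injective) contains the element ⟨0,0⟩, then I = W(g,1). -/
theorem ideal_containing_del_is_top (F : Type*) [Field F] [CharZero F] (g : ℤ →+ F)
    (hg : Function.Injective g)
    (W : Type*) [LieRing W] [LieAlgebra F W] (E : Module.Basis (ℤ × ℤ) F W)
    (hbr : ∀ a i b j : ℤ, ⁅E (a, i), E (b, j)⁆ =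
      (g b - g a) • E (a + b, i + j) + ((j - i : ℤ) : F) • E (a + b, i + j - 1))
    (I : LieIdeal F W) (hI : E (0, 0) ∈ I) : I = ⊤ := by
  -- Step 1: E (b, 0) ∈ I for b ≠ 0
  have h0 : ∀ b : ℤ, b ≠ 0 → E (b, 0) ∈ I := by
    intro b hb
    have h : ⁅E (b, 0), E (0, 0)⁆ ∈ I := I.lie_mem hI
    rw [hbr] at h
    simp only [map_zero, zero_sub, add_zero, sub_self, Int.cast_zero, zero_smul,
      add_zero] at h
    have hgb : g b ≠ 0 := fun h' => hb (hg (h'.trans (map_zero g).symm))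
    have h2 := I.smul_mem (-(g b))⁻¹ h
    rwa [smul_smul, inv_mul_cancel₀ (neg_ne_zero.mpr hgb), one_smul] at h2
  -- Step 2: key elements
  have key : ∀ a i b : ℤ, b ≠ 0 →
      (2 * g b - g a) • E (a, i) + ((-i : ℤ) : F) • E (a, i - 1) ∈ I := by
    intro a i b hb
    have h : ⁅E (a - b, i), E (b, 0)⁆ ∈ I := I.lie_mem (h0 b hb)
    rw [hbr] at h
    have hab : a - b + b = a := by ring
    rw [hab, add_zero, zero_sub] at h
    have : g b - g (a - b) = 2 * g b - g a := by
      rw [map_sub]; ring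
    rwa [this] at h
  -- Step 3: all basis vectors in I
  have hmem : ∀ a i : ℤ, E (a, i) ∈ I := by
    intro a i
    have h1 := key a i 1 one_ne_zero
    have h2 := key a i 2 two_ne_zero
    have h3 := I.sub_mem h1 h2
    have heq : ((2 * g 1 - g a) • E (a, i) + ((-i : ℤ) : F) • E (a, i - 1)) -
        ((2 * g 2 - g a) • E (a, i) + ((-i : ℤ) : F) • E (a, i - 1)) =
        (2 * (g 1 - g 2)) • E (a, i) := by
      rw [mul_sub]; module
    rw [heq] at h3
    have hc : (2 : F) * (g 1 - g 2) ≠ 0 := by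
      refine mul_ne_zero two_ne_zero (sub_ne_zero.mpr ?_)
      intro h'
      exact absurd (hg h') (by decide)
    have h4 := I.smul_mem (2 * (g 1 - g 2))⁻¹ h3
    rwa [smul_smul, inv_mul_cancel₀ hc, one_smul] at h4
  -- Step 4: conclude
  rw [eq_top_iff]
  intro x _
  have hx : x ∈ Submodule.span F (Set.range E) := by rw [E.span_eq]; trivial
  refine Submodule.span_le.mpr ?_ hx
  rintro _ ⟨⟨a, i⟩, rfl⟩
  exact hmem a i
end

section
/- In W(g,1) with g injective, for every a ∈ ℤ and i ∈ ℤ the basis element ⟨a,i⟩ lies in the ideal generated by ⟨0,0⟩. -/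
theorem basis_mem_ideal_gen_del (F : Type*) [Field F] [CharZero F] (g : ℤ →+ F)
    (hg : Function.Injective g)
    (W : Type*) [LieRing W] [LieAlgebra F W] (E : Module.Basis (ℤ × ℤ) F W)
    (hbr : ∀ a i b j : ℤ, ⁅E (a, i), E (b, j)⁆ =
      (g b - g a) • E (a + b, i + j) + ((j - i : ℤ) : F) • E (a + b, i + j - 1))
    (a i : ℤ) :
    E (a, i) ∈ LieSubmodule.lieSpan F W ({E (0, 0)} : Set W) := by
  set I := LieSubmodule.lieSpan F W ({E (0, 0)} : Set W) with hI
  have h00 : E (0, 0) ∈ I := LieSubmodule.subset_lieSpan rfl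
  have hg0 : g 0 = 0 := map_zero g
  have hbne : ∀ b : ℤ, b ≠ 0 → g b ≠ 0 := by
    intro b hb h
    exact hb (hg (h.trans hg0.symm))
  -- step 1: E (b, 0) ∈ I for b ≠ 0
  have hb0 : ∀ b : ℤ, b ≠ 0 → E (b, 0) ∈ I := by
    intro b hb
    have h1 := hbr b 0 0 0
    have hm : ⁅E (b, 0), E (0, 0)⁆ ∈ I := I.lie_mem h00
    rw [h1] at hm
    simp only [hg0, add_zero, sub_zero, zero_sub, Int.cast_zero, zero_smul] at hm
    have hm2 := I.smul_mem (-g b)⁻¹ hm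
    rw [smul_smul, inv_mul_cancel₀ (neg_ne_zero.2 (hbne b hb)), one_smul] at hm2
    exact hm2
  -- step 2: E (b, j) ∈ I for b ≠ 0, all j
  have hbj : ∀ b : ℤ, b ≠ 0 → ∀ j : ℤ, E (b, j) ∈ I := by
    intro b hb j
    have h1 := hbr 0 j b 0
    have h2 := hbr b j 0 0
    simp only [zero_add, add_zero] at h1 h2
    have hx : ⁅E (0, j), E (b, 0)⁆ ∈ I := I.lie_mem (hb0 b hb)
    have hy : ⁅E (b, j), E (0, 0)⁆ ∈ I := I.lie_mem h00
    have hsub : ⁅E (0, j), E (b, 0)⁆ - ⁅E (b, j), E (0, 0)⁆ = (2 * g b) • E (b, j) := by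
      rw [h1, h2, hg0]
      push_cast
      module
    have hm : (2 * g b) • E (b, j) ∈ I := by
      rw [← hsub]; exact I.sub_mem hx hy
    have hm2 := I.smul_mem (2 * g b)⁻¹ hm
    rwa [smul_smul, inv_mul_cancel₀ (mul_ne_zero two_ne_zero (hbne b hb)), one_smul] at hm2
  -- step 3: E (0, i) ∈ I for all i
  have h0i : ∀ i : ℤ, E (0, i) ∈ I := by
    intro i
    have h1 := hbr 1 0 (-1) i
    have h2 := hbr 1 i (-1) 0
    norm_num at h1 h2
    have hx : ⁅E (1, 0), E (-1, i)⁆ ∈ I := I.lie_mem (hbj (-1) (by norm_num) i)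
    have hy : ⁅E (1, i), E (-1, 0)⁆ ∈ I := I.lie_mem (hbj (-1) (by norm_num) 0)
    have hg1 : g 1 ≠ 0 := hbne 1 one_ne_zero
    have hsum : ⁅E (1, 0), E (-1, i)⁆ + ⁅E (1, i), E (-1, 0)⁆
        = (-(4 * g 1)) • E (0, i) := by
      rw [h1, h2]
      module
    have hm : (-(4 * g 1)) • E (0, i) ∈ I := by
      rw [← hsum]; exact I.add_mem hx hy
    have hm2 := I.smul_mem (-(4 * g 1))⁻¹ hm
    rwa [smul_smul, inv_mul_cancel₀
      (neg_ne_zero.2 (mul_ne_zero (by norm_num) hg1)), one_smul] at hm2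
  by_cases ha : a = 0
  · subst ha; exact h0i i
  · exact hbj a ha i
end

section
/- The Lie algebra W(g,1) with g injective has no nonzero ad-diagonalizable element with respect to the basis {⟨a,i⟩}: there is no nonzero l ∈ W(g,1) such that for every basis element m = ⟨a,i⟩ there exists α(m) ∈ F with [l, m] = α(m)·m. -/
theorem no_ad_diagonalizable (F : Type*) [Field F] [CharZero F] (g : ℤ →+ F)
    (hg : Function.Injective g)
    (W : Type*) [LieRing W] [LieAlgebra F W] (E : Module.Basis (ℤ × ℤ) F W)
    (hbr : ∀ a i b j : ℤ, ⁅E (a, i), E (b, j)⁆ =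
      (g b - g a) • E (a + b, i + j) + ((j - i : ℤ) : F) • E (a + b, i + j - 1)) :
    ¬ ∃ l : W, l ≠ 0 ∧ ∀ a i : ℤ, ∃ α : F, ⁅l, E (a, i)⁆ = α • E (a, i) := by
  rintro ⟨l, hl, hdiag⟩
  set c : (ℤ × ℤ) →₀ F := E.repr l with hc
  have hsum : ∑ p ∈ c.support, c p • E p = l := by
    conv_rhs => rw [← E.linearCombination_repr l]
    rw [Finsupp.linearCombination_apply, Finsupp.sum]
  have key : ∀ b j m n : ℤ, (m, n) ≠ (b, j) →
      c (m - b, n - j) * (g b - g (m - b))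
        + ((j - (n - j + 1) : ℤ) : F) * c (m - b, n - j + 1) = 0 := by
    intro b j m n hne
    obtain ⟨α, hα⟩ := hdiag b j
    have h1 : E.repr ⁅l, E (b, j)⁆ (m, n) = 0 := by
      rw [hα, map_smul, Finsupp.smul_apply, E.repr_self,
        Finsupp.single_apply, if_neg (fun h => hne h.symm), smul_zero]
    have sum_lie' : ∀ (s : Finset (ℤ × ℤ)) (f : ℤ × ℤ → W) (x : W),
        ⁅∑ p ∈ s, f p, x⁆ = ∑ p ∈ s, ⁅f p, x⁆ := by
      intro s f x
      induction s using Finset.cons_induction with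
      | empty => simp
      | cons a s ha ih => rw [Finset.sum_cons, Finset.sum_cons, add_lie, ih]
    rw [← hsum, sum_lie'] at h1
    have h2 : ∀ p ∈ c.support,
        E.repr ⁅c p • E p, E (b, j)⁆ (m, n) =
          (if p = (m - b, n - j) then c p * (g b - g p.1) else 0)
          + (if p = (m - b, n - j + 1) then ((j - p.2 : ℤ) : F) * c p else 0) := by
      rintro ⟨u, v⟩ _
      rw [smul_lie, hbr]
      have e1 : ((u + b, v + j) = (m, n)) ↔ ((u, v) = (m - b, n - j)) := by
        simp only [Prod.mk.injEq]; omega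
      have e2 : ((u + b, v + j - 1) = (m, n)) ↔ ((u, v) = (m - b, n - j + 1)) := by
        simp only [Prod.mk.injEq]; omega
      simp only [smul_add, map_add, map_smul, Finsupp.add_apply, Finsupp.smul_apply,
        E.repr_self, Finsupp.single_apply, smul_eq_mul, e1, e2]
      by_cases h : (u, v) = (m - b, n - j) <;>
        by_cases h' : (u, v) = (m - b, n - j + 1) <;>
        simp [h, h'] <;> ring
    rw [map_sum, Finsupp.coe_finset_sum, Finset.sum_apply,
      Finset.sum_congr rfl h2, Finset.sum_add_distrib,
      Finset.sum_ite_eq' c.support, Finset.sum_ite_eq' c.support] at h1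
    have r1 : (if (m - b, n - j) ∈ c.support
        then c (m - b, n - j) * (g b - g (m - b, n - j).1) else 0)
        = c (m - b, n - j) * (g b - g (m - b)) := by
      split
      · rfl
      · rw [Finsupp.notMem_support_iff.mp (by assumption), zero_mul]
    have r2 : (if (m - b, n - j + 1) ∈ c.support
        then ((j - (m - b, n - j + 1).2 : ℤ) : F) * c (m - b, n - j + 1) else 0)
        = ((j - (n - j + 1) : ℤ) : F) * c (m - b, n - j + 1) := by
      split
      · rfl
      · rw [Finsupp.notMem_support_iff.mp (by assumption), mul_zero]
    rw [r1, r2] at h1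
    exact h1
  have hvanish : ∀ u v : ℤ, (u, v) ≠ (0, 0) → c (u, v) = 0 := by
    intro u v huv
    simp only [ne_eq, Prod.mk.injEq, not_and] at huv
    have hne : ∀ w : ℤ, ((u + w, v + (v + 1)) : ℤ × ℤ) ≠ (w, v + 1) := by
      intro w
      simp only [ne_eq, Prod.mk.injEq, not_and]
      intro h; omega
    have h1 := key (u + 1) (v + 1) (u + (u + 1)) (v + (v + 1)) (hne (u + 1))
    have h2 := key (u + 2) (v + 1) (u + (u + 2)) (v + (v + 1)) (hne (u + 2))
    simp only [add_sub_cancel_right, sub_self, Int.cast_zero, zero_mul, add_zero] at h1 h2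
    have h3 : c (u, v) * (g (u + 1) - g (u + 2)) = 0 := by linear_combination h1 - h2
    have h4 : g (u + 1) - g (u + 2) ≠ 0 := by
      intro h
      exact (by omega : (u + 1 : ℤ) ≠ u + 2) (hg (sub_eq_zero.mp h))
    exact (mul_eq_zero.mp h3).resolve_right h4
  have hzero : c (0, 0) = 0 := by
    have h1 := key 1 1 1 0 (by simp)
    have e : ((1 : ℤ) - 1, (0 : ℤ) - 1) = ((0 : ℤ), (-1 : ℤ)) := by norm_num
    rw [e] at h1
    rw [hvanish 0 (-1) (by simp)] at h1
    norm_num at h1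
    convert h1 using 2 <;> norm_num
  apply hl
  have hcz : c = 0 := by
    ext ⟨u, v⟩
    by_cases h : ((u, v) : ℤ × ℤ) = (0, 0)
    · rw [h]; simpa using hzero
    · simpa using hvanish u v h
  have := E.repr.injective (by rw [← hc, hcz, map_zero] : E.repr l = E.repr 0)
  exact this
end

section
/- Any element l of W(g,1) that is ad-diagonalizable with respect to the basis {⟨a,i⟩} must lie in the zero-graded component W_0 = span{⟨0,i⟩ : i ∈ ℤ}. -/
theorem ad_diagonalizable_mem_W0 (F : Type*) [Field F] [CharZero F] (g : ℤ →+ F)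
    (hg : Function.Injective g)
    (W : Type*) [LieRing W] [LieAlgebra F W] (E : Module.Basis (ℤ × ℤ) F W)
    (hbr : ∀ a i b j : ℤ, ⁅E (a, i), E (b, j)⁆ =
      (g b - g a) • E (a + b, i + j) + ((j - i : ℤ) : F) • E (a + b, i + j - 1))
    (l : W) (hl : ∀ a i : ℤ, ∃ α : F, ⁅l, E (a, i)⁆ = α • E (a, i)) :
    l ∈ Submodule.span F (Set.range fun i : ℤ => E (0, i)) := by
  classical
  have key : ∀ a i : ℤ, a ≠ 0 → E.repr l (a, i) = 0 := by
    intro a i ha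
    obtain ⟨α, hα⟩ := hl 0 (i + 1)
    set φ : W →ₗ[F] W :=
      { toFun := fun x => ⁅x, E (0, i + 1)⁆
        map_add' := fun x y => add_lie x y _
        map_smul' := fun t x => smul_lie t x _ } with hφ
    set ψ : W →ₗ[F] F :=
      (Finsupp.lapply (a, 2 * i + 1)).comp (E.repr.toLinearMap.comp φ) with hψ
    have hψE : ∀ p : ℤ × ℤ, ψ (E p) = if p = (a, i) then -(g a) else 0 := by
      rintro ⟨a', i'⟩
      have : φ (E (a', i')) = ⁅E (a', i'), E (0, i + 1)⁆ := rfl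
      have hb := hbr a' i' 0 (i + 1)
      simp only [hψ, LinearMap.comp_apply, LinearMap.coe_comp, LinearEquiv.coe_toLinearMap,
        Finsupp.lapply_apply, this, hb, map_add, map_smul, Module.Basis.repr_self,
        Finsupp.smul_single, Finsupp.single_apply, Finsupp.coe_add, Finsupp.coe_smul,
        Pi.add_apply, Pi.smul_apply, smul_eq_mul]
      by_cases h1 : a' = a ∧ i' = i
      · obtain ⟨rfl, rfl⟩ := h1
        simp [Prod.ext_iff]
        ring_nf
        simp [map_zero]
      · have h2 : (a', i' + (i + 1)) ≠ (a, 2 * i + 1) ∨ (g 0 - g a') = 0 := by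
          by_cases hh : (a', i' + (i + 1)) = (a, 2 * i + 1)
          · exfalso; apply h1
            obtain ⟨ha', hi'⟩ := Prod.mk.injEq .. ▸ hh
            exact ⟨ha', by omega⟩
          · exact Or.inl hh
        have hR : ((a', i') : ℤ × ℤ) ≠ (a, i) := by
          intro hh
          obtain ⟨u, v⟩ := Prod.mk.injEq .. ▸ hh
          exact h1 ⟨u, v⟩
        have hA : ((a' + 0, i' + (i + 1)) : ℤ × ℤ) ≠ (a, 2 * i + 1) := by
          intro hh
          obtain ⟨u, v⟩ := Prod.mk.injEq .. ▸ hh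
          exact h1 ⟨by omega, by omega⟩
        rw [if_neg hA, if_neg hR, zero_add]
        split_ifs with hB
        · obtain ⟨u, v⟩ := Prod.mk.injEq .. ▸ hB
          have hz : i + 1 - i' = 0 := by omega
          rw [hz]
          simp
        · rfl
    have hga : g a ≠ 0 := fun h => ha (hg (h.trans (map_zero g).symm))
    have hs1 : ψ l = E.repr l (a, i) • (-(g a)) := by
      conv_lhs => rw [← E.linearCombination_repr l]
      rw [Finsupp.apply_linearCombination, Finsupp.linearCombination_apply]
      rw [Finsupp.sum_eq_single (a, i)]
      · rw [Function.comp_apply, hψE, if_pos rfl]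
      · intro p hp hne
        rw [Function.comp_apply, hψE, if_neg hne, smul_zero]
      · simp
    have hs2 : ψ l = 0 := by
      have h0 : ψ l = E.repr (α • E (0, i + 1)) (a, 2 * i + 1) := by
        simp only [hψ, LinearMap.comp_apply, LinearEquiv.coe_toLinearMap,
          Finsupp.lapply_apply]
        have : φ l = ⁅l, E (0, i + 1)⁆ := rfl
        rw [this, hα]
      rw [h0, map_smul, Module.Basis.repr_self, Finsupp.smul_single, Finsupp.single_apply,
        if_neg]
      intro hh
      obtain ⟨u, v⟩ := Prod.mk.injEq .. ▸ hh
      exact ha u.symm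
    rw [hs1] at hs2
    rcases (by simpa [smul_eq_mul] using hs2 : E.repr l (a, i) = 0 ∨ g a = 0) with h | h
    · exact h
    · exact absurd h hga
  -- conclude
  have := E.linearCombination_repr l
  rw [← this, Finsupp.linearCombination_apply, Finsupp.sum]
  refine Submodule.sum_mem _ ?_
  intro p hp
  refine Submodule.smul_mem _ _ (Submodule.subset_span ?_)
  have h0 : p.1 = 0 := by
    by_contra h
    exact (Finsupp.mem_support_iff.mp hp) (key p.1 p.2 h)
  exact ⟨p.2, by rw [← h0]⟩
end

section
/- For any element c·⟨0,1⟩ (c ∈ F, c ≠ 0) of W(g,1) with g injective, and any a ∈ ℤ with a ≠ 0, the bracket [c·⟨0,1⟩, ⟨a,0⟩] = c·g(a)·⟨a,1⟩ - c·⟨a,0⟩ is not a scalar multiple of ⟨a,0⟩; hence c·⟨0,1⟩ is not ad-diagonalizable. -/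
theorem c_x_del_not_diagonalizable (F : Type*) [Field F] [CharZero F] (g : ℤ →+ F)
    (hg : Function.Injective g)
    (W : Type*) [LieRing W] [LieAlgebra F W] (E : Module.Basis (ℤ × ℤ) F W)
    (hbr : ∀ a i b j : ℤ, ⁅E (a, i), E (b, j)⁆ =
      (g b - g a) • E (a + b, i + j) + ((j - i : ℤ) : F) • E (a + b, i + j - 1))
    (c : F) (hc : c ≠ 0) (a : ℤ) (ha : a ≠ 0) :
    ⁅c • E (0, 1), E (a, 0)⁆ = (c * g a) • E (a, 1) - c • E (a, 0) ∧
    ¬ ∃ α : F, ⁅c • E (0, 1), E (a, 0)⁆ = α • E (a, 0) := by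
  have hga : g a ≠ 0 := fun h => ha (hg (h.trans (map_zero g).symm))
  have key : ⁅c • E (0, 1), E (a, 0)⁆ = (c * g a) • E (a, 1) - c • E (a, 0) := by
    rw [smul_lie, hbr 0 1 a 0]
    simp only [map_zero, sub_zero, zero_add]
    norm_num
    rw [smul_smul]; abel
  refine ⟨key, ?_⟩
  rintro ⟨α, hα⟩
  rw [key] at hα
  have := congrArg (fun w => E.repr w (a, 1)) hα
  simp only [map_sub, map_smul, Module.Basis.repr_self, Finsupp.smul_single, smul_eq_mul,
    mul_one] at this
  rw [Finsupp.sub_apply, Finsupp.single_apply, Finsupp.single_apply, Finsupp.single_apply] at this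
  simp only [if_pos rfl] at this
  have h10 : ((a, 1) : ℤ × ℤ) ≠ (a, 0) := by simp
  rw [if_neg (Ne.symm h10), if_neg (Ne.symm h10)] at this
  simp at this
  exact hga (by tauto)
end

section
/- Let D be a derivation of W(g,1)_+ (with g injective) satisfying D(⟨0,0⟩) = 0. Then D = f·ad_{⟨0,0⟩} + S for some f ∈ F and some scalar derivation S, i.e., a derivation S with S(⟨a,i⟩) = s_{a,i}·⟨a,i⟩ for scalars s_{a,i} ∈ F. -/
theorem derivation_killing_del (F : Type*) [Field F] [CharZero F] (g : ℤ →+ F)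
    (hg : Function.Injective g)
    (W : Type*) [LieRing W] [LieAlgebra F W] (E : Module.Basis (ℤ × ℕ) F W)
    (hbr : ∀ (a : ℤ) (i : ℕ) (b : ℤ) (j : ℕ), ⁅E (a, i), E (b, j)⁆ =
      (g b - g a) • E (a + b, i + j) + (((j : ℤ) - (i : ℤ)) : F) • E (a + b, i + j - 1))
    (D : LieDerivation F W W) (hD : D (E (0, 0)) = 0) :
    ∃ (f : F) (S : LieDerivation F W W),
      (∀ (a : ℤ) (i : ℕ), ∃ s : F, S (E (a, i)) = s • E (a, i)) ∧
      ∀ x : W, D x = f • ⁅E (0, 0), x⁆ + S x := by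
  have hg0 : g 0 = 0 := map_zero g
  -- bracket with E (0,0)
  have br00 : ∀ (b : ℤ) (j : ℕ), ⁅E (0, 0), E (b, j)⁆
      = g b • E (b, j) + (j : F) • E (b, j - 1) := by
    intro b j
    rw [hbr]
    push_cast
    simp [hg0]
  -- bracket with E (0,1)
  have br01 : ∀ (b : ℤ) (j : ℕ), ⁅E (0, 1), E (b, j)⁆
      = g b • E (b, j + 1) + ((j : F) - 1) • E (b, j) := by
    intro b j
    rw [hbr]
    push_cast
    simp [hg0, add_comm 1 j]
  -- coordinates of ad (E (0,0))
  have repr00 : ∀ (x : W) (a : ℤ) (i : ℕ), E.repr ⁅E (0, 0), x⁆ (a, i)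
      = g a * E.repr x (a, i) + ((i : F) + 1) * E.repr x (a, i + 1) := by
    intro x a i
    have hx : (E.coord (a, i)) ∘ₗ (LieAlgebra.ad F W (E (0, 0)))
        = g a • E.coord (a, i) + ((i : F) + 1) • E.coord (a, i + 1) := by
      apply E.ext
      rintro ⟨b, j⟩
      simp only [LinearMap.comp_apply, LieAlgebra.ad_apply, br00, LinearMap.add_apply,
        LinearMap.smul_apply, map_add, map_smul, Module.Basis.coord_apply, Module.Basis.repr_self,
        smul_eq_mul, Finsupp.single_apply, Prod.mk.injEq]
      rcases eq_or_ne b a with rfl | hba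
      · rcases eq_or_ne j i with rfl | hji
        · rcases Nat.eq_zero_or_pos j with rfl | hj
          · simp
          · have h2 : j - 1 ≠ j := by omega
            have h3 : j ≠ j + 1 := by omega
            simp [h2, h3]
        · rcases eq_or_ne j (i + 1) with rfl | hji1
          · have h2 : i + 1 - 1 = i := by omega
            simp [hji, h2]
          · have h2 : j - 1 ≠ i := by omega
            simp [hji, hji1, h2]
      · simp [hba]
    have h := LinearMap.congr_fun hx x
    simpa [LieAlgebra.ad_apply, Module.Basis.coord_apply] using h
  -- coordinates of ad (E (0,1)) at a = 0
  have repr01 : ∀ (x : W) (i : ℕ), E.repr ⁅E (0, 1), x⁆ (0, i)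
      = ((i : F) - 1) * E.repr x (0, i) := by
    intro x i
    have hx : (E.coord ((0 : ℤ), i)) ∘ₗ (LieAlgebra.ad F W (E (0, 1)))
        = ((i : F) - 1) • E.coord (0, i) := by
      apply E.ext
      rintro ⟨b, j⟩
      simp only [LinearMap.comp_apply, LieAlgebra.ad_apply, br01, LinearMap.add_apply,
        LinearMap.smul_apply, map_add, map_smul, Module.Basis.coord_apply, Module.Basis.repr_self,
        smul_eq_mul, Finsupp.single_apply, Prod.mk.injEq]
      rcases eq_or_ne b 0 with rfl | hb
      · rcases eq_or_ne j i with rfl | hji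
        · simp [hg0]
        · simp [hji, hg0]
      · simp [hb]
    have h := LinearMap.congr_fun hx x
    simpa [LieAlgebra.ad_apply, Module.Basis.coord_apply] using h
  -- finite support trick
  have supp_trick : ∀ (c : (ℤ × ℕ) →₀ F) (a : ℤ),
      (∀ i : ℕ, c (a, i) ≠ 0 → c (a, i + 1) ≠ 0) → ∀ i, c (a, i) = 0 := by
    intro c a hstep i
    by_contra h0
    have hall : ∀ k : ℕ, c (a, i + k) ≠ 0 := by
      intro k
      induction k with
      | zero => simpa using h0
      | succ n ih => simpa [← Nat.add_assoc] using hstep _ ih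
    have hinf : (↑c.support : Set (ℤ × ℕ)).Infinite := by
      apply Set.infinite_of_injective_forall_mem (f := fun k : ℕ => (a, i + k))
      · intro k l hkl
        simpa using hkl
      · intro k
        simpa [Finsupp.mem_support_iff] using hall k
    exact hinf c.support.finite_toSet
  -- D commutes with ad (E (0,0))
  have comm : ∀ x : W, D ⁅E (0, 0), x⁆ = ⁅E (0, 0), D x⁆ := by
    intro x
    rw [D.apply_lie_eq_add, hD]
    simp
  -- the key coordinate relation
  have rel : ∀ (b : ℤ) (j : ℕ) (a : ℤ) (i : ℕ),
      g b * E.repr (D (E (b, j))) (a, i) + (j : F) * E.repr (D (E (b, j - 1))) (a, i)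
      = g a * E.repr (D (E (b, j))) (a, i)
        + ((i : F) + 1) * E.repr (D (E (b, j))) (a, i + 1) := by
    intro b j a i
    have h1 : D ⁅E (0, 0), E (b, j)⁆ = ⁅E (0, 0), D (E (b, j))⁆ := comm _
    rw [br00] at h1
    have h2 := congrArg (fun y => E.repr y (a, i)) h1
    simp only [map_add, map_smul, Finsupp.add_apply, Finsupp.smul_apply, smul_eq_mul] at h2
    rw [repr00] at h2
    exact h2
  -- scalar action on degree-0 elements
  have L1 : ∀ b : ℤ, D (E (b, 0)) = (E.repr (D (E (b, 0))) (b, 0)) • E (b, 0) := by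
    intro b
    have hz : ∀ (a : ℤ) (i : ℕ), a ≠ b → E.repr (D (E (b, 0))) (a, i) = 0 := by
      intro a i ha
      refine supp_trick _ a (fun k hk => ?_) i
      by_contra h'
      have h := rel b 0 a k
      simp only [Nat.cast_zero, zero_mul, add_zero, h', mul_zero] at h
      have hz0 : (g b - g a) * E.repr (D (E (b, 0))) (a, k) = 0 := by linear_combination h
      have hne : g b - g a ≠ 0 := sub_ne_zero.mpr (fun hgg => ha (hg hgg).symm)
      exact hk ((mul_eq_zero.mp hz0).resolve_left hne)
    have hb : ∀ i : ℕ, E.repr (D (E (b, 0))) (b, i + 1) = 0 := by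
      intro i
      have h := rel b 0 b i
      simp only [Nat.cast_zero, zero_mul, add_zero] at h
      have h2 : ((i : F) + 1) * E.repr (D (E (b, 0))) (b, i + 1) = 0 := by linear_combination -h
      have hne : ((i : F) + 1) ≠ 0 := by exact_mod_cast Nat.succ_ne_zero i
      exact (mul_eq_zero.mp h2).resolve_left hne
    apply E.repr.injective
    ext ⟨a, i⟩
    rw [map_smul, Module.Basis.repr_self]
    rcases eq_or_ne a b with rfl | hab
    · rcases i with _ | n
      · simp
      · rw [hb n]
        simp [Finsupp.single_apply, Prod.ext_iff]
    · rw [hz a i hab]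
      simp [Finsupp.single_apply, Prod.ext_iff, Ne.symm hab]
  -- support of D (E (0,j)) lies over a = 0
  have hsupp0 : ∀ (j : ℕ) (a : ℤ) (i : ℕ), a ≠ 0 → E.repr (D (E (0, j))) (a, i) = 0 := by
    intro j
    induction j with
    | zero =>
      intro a i _
      rw [hD]
      simp
    | succ n ih =>
      intro a i ha
      have hga : g a ≠ 0 := fun h => ha (hg (by rw [h, hg0]))
      refine supp_trick _ a (fun k hk => ?_) i
      by_contra h'
      have h := rel 0 (n + 1) a k
      rw [hg0] at h
      simp only [zero_mul, zero_add, Nat.add_sub_cancel] at h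
      rw [ih a k ha, h'] at h
      simp only [mul_zero, add_zero] at h
      rcases mul_eq_zero.mp h.symm with h0 | h0
      · exact hga h0
      · exact hk h0
  -- D (E (0,1)) is a multiple of E (0,0)
  set f : F := E.repr (D (E (0, 1))) (0, 0) with hf
  have hDE01 : D (E (0, 1)) = f • E (0, 0) := by
    have hz1 : ∀ i : ℕ, E.repr (D (E (0, 1))) (0, i + 1) = 0 := by
      intro i
      have h := rel 0 1 0 i
      rw [hg0] at h
      simp only [zero_mul, zero_add, Nat.cast_one, one_mul, Nat.sub_self, hD] at h
      simp only [map_zero, Finsupp.zero_apply] at h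
      have hne : ((i : F) + 1) ≠ 0 := by exact_mod_cast Nat.succ_ne_zero i
      exact (mul_eq_zero.mp h.symm).resolve_left hne
    apply E.repr.injective
    ext ⟨a, i⟩
    rw [map_smul, Module.Basis.repr_self]
    rcases eq_or_ne a 0 with rfl | ha
    · rcases i with _ | n
      · simp [hf]
      · rw [hz1 n]
        simp [Finsupp.single_apply, Prod.ext_iff]
    · rw [hsupp0 1 a i ha]
      simp [Finsupp.single_apply, Prod.ext_iff, Ne.symm ha]
  have hderiv01 : ∀ (b : ℤ) (j : ℕ), D ⁅E (0, 1), E (b, j)⁆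
      = f • ⁅E (0, 0), E (b, j)⁆ + ⁅E (0, 1), D (E (b, j))⁆ := by
    intro b j
    rw [D.apply_lie_eq_add, hDE01, smul_lie, add_comm]
  -- main structure lemma, a ≠ 0
  have hmain_ne : ∀ a : ℤ, a ≠ 0 → ∀ i : ℕ, ∃ α : F,
      D (E (a, i)) = α • E (a, i) + (f * (i : F)) • E (a, i - 1) := by
    intro a ha
    have hga : g a ≠ 0 := fun h => ha (hg (by rw [h, hg0]))
    intro i
    induction i with
    | zero =>
      refine ⟨E.repr (D (E (a, 0))) (a, 0), ?_⟩
      rw [L1 a]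
      simp
    | succ n ih =>
      obtain ⟨α, hα⟩ := ih
      refine ⟨α, ?_⟩
      have H := hderiv01 a n
      rw [br01 a n] at H
      simp only [map_add, map_smul] at H
      rw [br00 a n, hα] at H
      simp only [lie_add, lie_smul] at H
      rw [br01 a n, br01 a (n - 1)] at H
      apply smul_right_injective W hga
      rcases n with _ | m
      · simp only [Nat.cast_zero, Nat.zero_sub, Nat.cast_ofNat, mul_zero, zero_smul,
          Nat.sub_self] at H ⊢
        push_cast at H ⊢
        linear_combination (norm := module) H
      · have h1 : m + 1 - 1 = m := rfl
        rw [h1] at H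
        push_cast at H ⊢
        linear_combination (norm := module) H
  -- main structure lemma, a = 0
  have hmain0 : ∀ j : ℕ, D (E (0, j)) = (E.repr (D (E (0, j))) (0, j)) • E (0, j)
      + (f * (j : F)) • E (0, j - 1) := by
    intro j
    have relj : ∀ i : ℕ, ((j : F) - (i : F)) * E.repr (D (E (0, j))) (0, i)
        = f * (j : F) * (if j - 1 = i then 1 else 0) := by
      intro i
      have H := hderiv01 0 j
      rw [br01 0 j, br00 0 j, hg0] at H
      simp only [zero_smul, zero_add] at H
      have h2 := congrArg (fun y => E.repr y ((0 : ℤ), i)) H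
      simp only [map_add, map_smul, Finsupp.add_apply, Finsupp.smul_apply, smul_eq_mul,
        Module.Basis.repr_self, Finsupp.single_apply, Prod.mk.injEq, true_and] at h2
      rw [repr01] at h2
      linear_combination h2
    apply E.repr.injective
    ext ⟨a, i⟩
    simp only [map_add, map_smul, Finsupp.add_apply, Finsupp.smul_apply, smul_eq_mul,
      Module.Basis.repr_self, Finsupp.single_apply, Prod.mk.injEq]
    rcases eq_or_ne a 0 with rfl | ha
    · simp only [true_and]
      rcases eq_or_ne i j with rfl | hij
      · rcases Nat.eq_zero_or_pos i with rfl | hi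
        · simp
        · have h2 : i - 1 ≠ i := by omega
          simp [h2]
      · rcases eq_or_ne i (j - 1) with rfl | hij1
        · have hj : j ≠ 0 := by omega
          have h := relj (j - 1)
          have hcast : (j : F) - ((j - 1 : ℕ) : F) = 1 := by
            have hj1 : j - 1 + 1 = j := by omega
            rw [← hj1]
            push_cast
            ring
          rw [hcast, one_mul, if_pos rfl, mul_one] at h
          rw [h]
          simp [Ne.symm hij]
        · have h := relj i
          have hji : (j : F) - (i : F) ≠ 0 := by
            have : (j : ℕ) ≠ i := Ne.symm hij
            intro hc
            exact this (by exact_mod_cast sub_eq_zero.mp hc)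
          rw [if_neg (fun hc => hij1 hc.symm), mul_zero] at h
          have := mul_eq_zero.mp h
          rcases this with h0 | h0
          · exact absurd h0 hji
          · rw [h0, if_neg (fun hc : j = i => hij hc.symm),
              if_neg (fun hc : j - 1 = i => hij1 hc.symm)]
            simp
    · rw [hsupp0 j a i ha]
      simp [Ne.symm ha]
  have hmain : ∀ (a : ℤ) (i : ℕ), ∃ α : F,
      D (E (a, i)) = α • E (a, i) + (f * (i : F)) • E (a, i - 1) := by
    intro a i
    rcases eq_or_ne a 0 with rfl | ha
    · exact ⟨_, hmain0 i⟩
    · exact hmain_ne a ha i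
  refine ⟨f, D - f • (LieDerivation.ad F W (E (0, 0))), ?_, ?_⟩
  · intro a i
    obtain ⟨α, hα⟩ := hmain a i
    refine ⟨α - f * g a, ?_⟩
    have : (D - f • (LieDerivation.ad F W (E (0, 0)))) (E (a, i))
        = D (E (a, i)) - f • ⁅E (0, 0), E (a, i)⁆ := by simp
    rw [this, hα, br00]
    module
  · intro x
    have : (D - f • (LieDerivation.ad F W (E (0, 0)))) x = D x - f • ⁅E (0, 0), x⁆ := by simp
    rw [this]
    abel
end

section
/- Every derivation of W(g,1)_+ (with g injective) is the sum of an inner derivation ad_w (for some w ∈ W(g,1)_+) and a scalar derivation. -/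
set_option linter.unusedSectionVars false

section Aux
variable {F : Type*} [Field F] [CharZero F] {W : Type*} [LieRing W] [LieAlgebra F W]

def brLmap (F : Type*) [Field F] {W : Type*} [LieRing W] [LieAlgebra F W] (x : W) :
    W →ₗ[F] W where
  toFun y := ⁅x, y⁆
  map_add' a b := lie_add x a b
  map_smul' c y := lie_smul c x y

@[simp] lemma brLmap_apply (x y : W) : brLmap F x y = ⁅x, y⁆ := rfl

def brRmap (F : Type*) [Field F] {W : Type*} [LieRing W] [LieAlgebra F W] (y : W) :
    W →ₗ[F] W where
  toFun x := ⁅x, y⁆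
  map_add' a b := add_lie a b y
  map_smul' c x := smul_lie c x y

@[simp] lemma brRmap_apply (x y : W) : brRmap F y x = ⁅x, y⁆ := rfl

variable (g : ℤ →+ F) (E : Module.Basis (ℤ × ℕ) F W)
variable (hbr : ∀ (a : ℤ) (i : ℕ) (b : ℤ) (j : ℕ), ⁅E (a, i), E (b, j)⁆ =
      (g b - g a) • E (a + b, i + j) + (((j : ℤ) - (i : ℤ)) : F) • E (a + b, i + j - 1))
include hbr

lemma adE (b : ℤ) (j : ℕ) :
    ⁅E (0, 0), E (b, j)⁆ = g b • E (b, j) + (j : F) • E (b, j - 1) := by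
  have := hbr 0 0 b j
  simpa using this

lemma keyrepr (b : ℤ) (k : ℕ) (y : W) :
    E.repr ⁅E (0, 0), y⁆ (b, k)
      = g b * E.repr y (b, k) + ((k + 1 : ℕ) : F) * E.repr y (b, k + 1) := by
  have hmaps : (Finsupp.lapply (b, k)) ∘ₗ (E.repr : W →ₗ[F] ((ℤ × ℕ) →₀ F)) ∘ₗ brLmap F (E (0,0))
      = g b • ((Finsupp.lapply (b, k)) ∘ₗ (E.repr : W →ₗ[F] ((ℤ × ℕ) →₀ F)))
        + ((k + 1 : ℕ) : F) • ((Finsupp.lapply (b, k + 1)) ∘ₗ (E.repr : W →ₗ[F] ((ℤ × ℕ) →₀ F))) := by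
    apply E.ext
    rintro ⟨b', j⟩
    simp only [LinearMap.comp_apply, LinearMap.add_apply, LinearMap.smul_apply,
      LinearEquiv.coe_coe, Finsupp.lapply_apply, brLmap_apply, smul_eq_mul]
    rw [adE g E hbr]
    simp only [map_add, map_smul, Module.Basis.repr_self, Finsupp.add_apply, Finsupp.smul_apply,
      Finsupp.single_apply, smul_eq_mul, Prod.mk.injEq]
    by_cases hb : b' = b
    · subst hb
      simp only [and_true, true_and, if_true, eq_self_iff_true]
      congr 1
      by_cases hjk : j = k + 1
      · subst hjk; simp
      · rw [if_neg hjk, mul_zero]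
        by_cases hj1 : j - 1 = k
        · have hj0 : j = 0 := by omega
          subst hj0; simp
        · rw [if_neg hj1, mul_zero]
    · simp [hb]
  exact LinearMap.congr_fun hmaps y



lemma kerlem (hg : Function.Injective g) (b : ℤ) (y : W)
    (hy : ⁅E (0, 0), y⁆ = g b • y) : y = E.repr y (b, 0) • E (b, 0) := by
  have hc : ∀ (b' : ℤ) (k : ℕ),
      g b' * E.repr y (b', k) + ((k + 1 : ℕ) : F) * E.repr y (b', k + 1)
        = g b * E.repr y (b', k) := by
    intro b' k
    rw [← keyrepr g E hbr, hy, map_smul]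
    simp
  have hA : ∀ b' : ℤ, b' ≠ b → ∀ k, E.repr y (b', k) = 0 := by
    intro b' hb'
    set N := (E.repr y).support.sup Prod.snd with hN
    have hbig : ∀ k, N < k → E.repr y (b', k) = 0 := by
      intro k hk
      by_contra hne
      have hmem : ((b', k) : ℤ × ℕ) ∈ (E.repr y).support := Finsupp.mem_support_iff.2 hne
      have := Finset.le_sup (f := Prod.snd) hmem
      simp only [← hN] at this
      omega
    have main : ∀ m k, N < k + m → E.repr y (b', k) = 0 := by
      intro m
      induction m with
      | zero => intro k hk; exact hbig k (by omega)
      | succ m ih =>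
        intro k hk
        rcases lt_or_ge N k with h' | h'
        · exact hbig k h'
        · have h2 : E.repr y (b', k + 1) = 0 := ih (k + 1) (by omega)
          have h3 := hc b' k
          rw [h2, mul_zero, add_zero] at h3
          have hgg : g b' - g b ≠ 0 := sub_ne_zero.2 fun e => hb' (hg e)
          have h4 : (g b' - g b) * E.repr y (b', k) = 0 := by linear_combination h3
          exact (mul_eq_zero.1 h4).resolve_left hgg
    intro k
    exact main (N + 1) k (by omega)
  have hB : ∀ k, E.repr y (b, k + 1) = 0 := by
    intro k
    have h3 := hc b k
    have h1 : ((k + 1 : ℕ) : F) * E.repr y (b, k + 1) = 0 := by linear_combination h3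
    have h2 : ((k + 1 : ℕ) : F) ≠ 0 := Nat.cast_ne_zero.2 (Nat.succ_ne_zero k)
    exact (mul_eq_zero.1 h1).resolve_left h2
  apply E.repr.injective
  ext ⟨b', k⟩
  rw [map_smul, Module.Basis.repr_self]
  simp only [Finsupp.smul_apply, Finsupp.single_apply, smul_eq_mul, Prod.mk.injEq]
  by_cases hb : b' = b
  · subst hb
    cases k with
    | zero => simp
    | succ k => simp [hB k]
  · simp [hA b' hb, Ne.symm hb]

lemma adsurj (hg : Function.Injective g) (x : W) : ∃ u : W, ⁅E (0, 0), u⁆ = x := by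
  have hmem : ∀ (b : ℤ) (j : ℕ), E (b, j) ∈ LinearMap.range (brLmap F (E (0, 0))) := by
    intro b j
    by_cases hb : b = 0
    · subst hb
      refine ⟨((j : F) + 1)⁻¹ • E (0, j + 1), ?_⟩
      rw [brLmap_apply, lie_smul, adE g E hbr, map_zero, zero_smul, zero_add, smul_smul]
      push_cast
      rw [inv_mul_cancel₀ (by exact_mod_cast (Nat.cast_ne_zero (R := F)).2 (Nat.succ_ne_zero j) : ((j : F) + 1) ≠ 0), one_smul]
    · have hgb : g b ≠ 0 := fun h0 => hb (hg (by rw [h0, map_zero]))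
      induction j with
      | zero =>
        refine ⟨(g b)⁻¹ • E (b, 0), ?_⟩
        rw [brLmap_apply, lie_smul, adE g E hbr]
        simp [smul_smul, inv_mul_cancel₀ hgb]
      | succ j ih =>
        have h1 : ⁅E (0, 0), E (b, j + 1)⁆ = g b • E (b, j + 1) + ((j + 1 : ℕ) : F) • E (b, j) := by
          simpa using adE g E hbr b (j + 1)
        have m1 : ⁅E (0, 0), E (b, j + 1)⁆ ∈ LinearMap.range (brLmap F (E (0, 0))) :=
          ⟨E (b, j + 1), rfl⟩
        have heq : E (b, j + 1)
            = (g b)⁻¹ • (⁅E (0, 0), E (b, j + 1)⁆ - ((j + 1 : ℕ) : F) • E (b, j)) := by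
          rw [h1, add_sub_cancel_right, smul_smul, inv_mul_cancel₀ hgb, one_smul]
        rw [heq]
        exact Submodule.smul_mem _ _ (Submodule.sub_mem _ m1 (Submodule.smul_mem _ _ ih))
  have hrange : LinearMap.range (brLmap F (E (0, 0))) = ⊤ := by
    refine top_unique ?_
    rw [← E.span_eq]
    refine Submodule.span_le.2 ?_
    rintro _ ⟨⟨b, j⟩, rfl⟩
    exact hmem b j
  have : x ∈ LinearMap.range (brLmap F (E (0, 0))) := hrange ▸ Submodule.mem_top
  obtain ⟨u, hu⟩ := this
  exact ⟨u, hu⟩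

end Aux

set_option maxHeartbeats 1000000 in
theorem derivation_inner_plus_scalar (F : Type*) [Field F] [CharZero F] (g : ℤ →+ F)
    (hg : Function.Injective g)
    (W : Type*) [LieRing W] [LieAlgebra F W] (E : Module.Basis (ℤ × ℕ) F W)
    (hbr : ∀ (a : ℤ) (i : ℕ) (b : ℤ) (j : ℕ), ⁅E (a, i), E (b, j)⁆ =
      (g b - g a) • E (a + b, i + j) + (((j : ℤ) - (i : ℤ)) : F) • E (a + b, i + j - 1))
    (D : LieDerivation F W W) :
    ∃ (w : W) (S : LieDerivation F W W),
      (∀ (a : ℤ) (i : ℕ), ∃ s : F, S (E (a, i)) = s • E (a, i)) ∧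
      ∀ x : W, D x = ⁅w, x⁆ + S x := by
  have hgne : ∀ {a b : ℤ}, a ≠ b → g b - g a ≠ 0 := fun {a b} hab =>
    sub_ne_zero.2 fun e => hab (hg e.symm)
  have hcanc : ∀ (s t : F) (p : ℤ × ℕ), s • E p = t • E p → s = t := by
    intro s t p hstp
    have := congrArg (fun zz => E.repr zz p) hstp
    simpa [Module.Basis.repr_self] using this
  have hTe0 : ∀ b : ℤ, ⁅E (0, 0), E (b, 0)⁆ = g b • E (b, 0) := by
    intro b; simpa using adE g E hbr b 0
  have hTe1 : ∀ b : ℤ, ⁅E (0, 0), E (b, 1)⁆ = g b • E (b, 1) + E (b, 0) := by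
    intro b
    have := adE g E hbr b 1
    simpa using this
  -- step 1: adjust D by an inner derivation so that it kills E (0,0)
  obtain ⟨u, hu⟩ := adsurj g E hbr hg (-(D (E (0, 0))))
  obtain ⟨D₁, hD₁apply⟩ : ∃ D₁ : LieDerivation F W W, ∀ x, D₁ x = D x + ⁅x, u⁆ :=
    ⟨D + LieDerivation.inner F W W u, fun x => by
      rw [LieDerivation.add_apply, LieDerivation.inner_apply_apply]⟩
  have hD₁h : D₁ (E (0, 0)) = 0 := by
    rw [hD₁apply, hu, add_neg_cancel]
  have hcomm : ∀ y, ⁅E (0, 0), D₁ y⁆ = D₁ ⁅E (0, 0), y⁆ := by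
    intro y
    rw [D₁.apply_lie_eq_add, hD₁h, zero_lie, add_zero]
  -- step 2: D₁ is triangular on the (b,0), (b,1) vectors
  have hαex : ∀ b : ℤ, ∃ s : F, D₁ (E (b, 0)) = s • E (b, 0) := by
    intro b
    have h1 : ⁅E (0, 0), D₁ (E (b, 0))⁆ = g b • D₁ (E (b, 0)) := by
      rw [hcomm, hTe0, map_smul]
    exact ⟨_, kerlem g E hbr hg b _ h1⟩
  choose α hα using hαex
  have hβex : ∀ b : ℤ, ∃ t : F, D₁ (E (b, 1)) = α b • E (b, 1) + t • E (b, 0) := by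
    intro b
    have h1 : ⁅E (0, 0), D₁ (E (b, 1)) - α b • E (b, 1)⁆
        = g b • (D₁ (E (b, 1)) - α b • E (b, 1)) := by
      rw [lie_sub, lie_smul, hcomm, hTe1, map_add, map_smul, hα b]
      module
    have h2 := kerlem g E hbr hg b _ h1
    exact ⟨_, sub_eq_iff_eq_add'.1 h2⟩
  choose β hβ using hβex
  -- step 3: relations for α and β
  have hbr00 : ∀ a b : ℤ, ⁅E (a, 0), E (b, 0)⁆ = (g b - g a) • E (a + b, 0) := by
    intro a b
    have := hbr a 0 b 0
    simpa using this
  have hbr01 : ∀ a b : ℤ, ⁅E (a, 0), E (b, 1)⁆ = (g b - g a) • E (a + b, 1) + E (a + b, 0) := by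
    intro a b
    have := hbr a 0 b 1
    simpa using this
  have hrel1 : ∀ a b : ℤ, a ≠ b → α (a + b) = α a + α b := by
    intro a b hab
    have h1 : D₁ ⁅E (a, 0), E (b, 0)⁆ = ((g b - g a) * α (a + b)) • E (a + b, 0) := by
      rw [hbr00, map_smul, hα, smul_smul]
    have h2 : D₁ ⁅E (a, 0), E (b, 0)⁆ = ((g b - g a) * (α a + α b)) • E (a + b, 0) := by
      rw [D₁.apply_lie_eq_add, hα, hα, lie_smul, smul_lie, hbr00, smul_smul, smul_smul]
      rw [← add_smul]
      ring_nf
    have h3 := hcanc _ _ _ (h1.symm.trans h2)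
    exact mul_left_cancel₀ (hgne hab) h3
  have hrel2 : ∀ a : ℤ, α (a + a) = α a + α a := by
    intro a
    have hbr2 : ⁅E (a, 0), E (a, 1)⁆ = E (a + a, 0) := by
      have := hbr a 0 a 1
      simpa using this
    have h1 : D₁ ⁅E (a, 0), E (a, 1)⁆ = α (a + a) • E (a + a, 0) := by
      rw [hbr2, hα]
    have h2 : D₁ ⁅E (a, 0), E (a, 1)⁆ = (α a + α a) • E (a + a, 0) := by
      rw [D₁.apply_lie_eq_add, hβ, hα, lie_add, lie_smul, lie_smul, lie_self, smul_zero,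
        add_zero, smul_lie, hbr2, ← add_smul]
    exact hcanc _ _ _ (h1.symm.trans h2)
  have hadd : ∀ a b : ℤ, α (a + b) = α a + α b := by
    intro a b
    by_cases hab : a = b
    · subst hab; exact hrel2 a
    · exact hrel1 a b hab
  have hαb : ∀ b : ℤ, α b = (b : F) * α 1 := by
    intro b
    have hA : ∀ n : ℤ, α n = n • α 1 := by
      intro n
      have := AddMonoidHom.map_zsmul (AddMonoidHom.mk' α hadd) n (1 : ℤ)
      simp only [smul_eq_mul, mul_one] at this; exact this
    rw [hA b, zsmul_eq_mul]
  -- β is constant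
  have hrel3 : ∀ a b : ℤ, a ≠ b → β (a + b) = β b := by
    intro a b hab
    have h1 : D₁ ⁅E (a, 0), E (b, 1)⁆
        = ((g b - g a) * α (a + b)) • E (a + b, 1)
          + ((g b - g a) * β (a + b) + α (a + b)) • E (a + b, 0) := by
      rw [hbr01, map_add, map_smul, hβ, hα, smul_add, smul_smul, smul_smul, add_smul, add_assoc]
    have h2 : D₁ ⁅E (a, 0), E (b, 1)⁆
        = ((g b - g a) * (α a + α b)) • E (a + b, 1)
          + ((g b - g a) * β b + (α a + α b)) • E (a + b, 0) := by
      rw [D₁.apply_lie_eq_add, hβ, hα, lie_add, lie_smul, lie_smul, smul_lie, hbr01, hbr00]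
      module
    have h3 := h1.symm.trans h2
    rw [hadd a b] at h3
    have h4 := congrArg (fun zz => E.repr zz (a + b, 0)) h3
    simp only [map_add, map_smul, Module.Basis.repr_self, Finsupp.add_apply, Finsupp.smul_apply,
      Finsupp.single_apply, Prod.mk.injEq, smul_eq_mul] at h4
    norm_num at h4
    exact h4.resolve_right (hgne hab)
  have hμ : ∀ b : ℤ, β b = β 0 := by
    intro b
    by_cases hb : b = 0
    · rw [hb]
    · have := hrel3 b 0 hb
      simpa using this
  -- step 4: the scalar derivation S
  set lam : F := α 1 with hlam
  set mu : F := β 0 with hmu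
  set Sc : ℤ → F := fun b => (b : F) * lam - mu * g b with hSc
  have hScadd : ∀ a b : ℤ, Sc (a + b) = Sc a + Sc b := by
    intro a b
    simp only [hSc, map_add]
    push_cast
    ring
  obtain ⟨Slin, hSlinE⟩ : ∃ Slin : W →ₗ[F] W, ∀ p : ℤ × ℕ, Slin (E p) = Sc p.1 • E p :=
    ⟨E.constr ℕ (fun p => Sc p.1 • E p), fun p => E.constr_basis ℕ _ p⟩
  have hSbasis : ∀ p q : ℤ × ℕ, Slin ⁅E p, E q⁆ = ⁅E p, Slin (E q)⁆ - ⁅E q, Slin (E p)⁆ := by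
    rintro ⟨a, i⟩ ⟨b, j⟩
    rw [hSlinE, hSlinE, lie_smul, lie_smul, hbr a i b j]
    rw [← lie_skew (E (b, j)) (E (a, i)), hbr a i b j]
    rw [map_add, map_smul, map_smul, hSlinE, hSlinE]
    simp only []
    rw [hScadd a b]
    module
  have hSleib1 : ∀ (q : ℤ × ℕ) (x : W),
      Slin ⁅x, E q⁆ = ⁅x, Slin (E q)⁆ - ⁅E q, Slin x⁆ := by
    intro q
    have hmaps : Slin ∘ₗ brRmap F (E q)
        = brRmap F (Slin (E q)) - brLmap F (E q) ∘ₗ Slin := by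
      apply E.ext
      intro p
      simp only [LinearMap.comp_apply, LinearMap.sub_apply, brRmap_apply, brLmap_apply]
      exact hSbasis p q
    intro x
    have := LinearMap.congr_fun hmaps x
    simpa using this
  have hSleib : ∀ x y : W, Slin ⁅x, y⁆ = ⁅x, Slin y⁆ - ⁅y, Slin x⁆ := by
    intro x
    have hmaps : Slin ∘ₗ brLmap F x
        = brLmap F x ∘ₗ Slin - brRmap F (Slin x) := by
      apply E.ext
      intro q
      simp only [LinearMap.comp_apply, LinearMap.sub_apply, brRmap_apply, brLmap_apply]
      exact hSleib1 q x
    intro y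
    have := LinearMap.congr_fun hmaps y
    simpa using this
  obtain ⟨S, hSapply⟩ : ∃ S : LieDerivation F W W, ∀ x, S x = Slin x :=
    ⟨⟨Slin, hSleib⟩, fun x => rfl⟩
  -- step 5: D₂ kills everything
  obtain ⟨D₂, hD₂apply⟩ : ∃ D₂ : LieDerivation F W W,
      ∀ x, D₂ x = D₁ x + mu • ⁅x, E (0, 0)⁆ - Slin x :=
    ⟨D₁ + mu • LieDerivation.inner F W W (E (0, 0)) - S, fun x => by
      rw [LieDerivation.sub_apply, LieDerivation.add_apply, LieDerivation.smul_apply,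
        LieDerivation.inner_apply_apply, hSapply]⟩
  have hD₂0 : ∀ b : ℤ, D₂ (E (b, 0)) = 0 := by
    intro b
    rw [hD₂apply, hα, hSlinE, ← lie_skew _ (E (0, 0)), hTe0]
    simp only [hSc]
    rw [hαb b]
    module
  have hD₂1 : ∀ b : ℤ, D₂ (E (b, 1)) = 0 := by
    intro b
    rw [hD₂apply, hβ, hSlinE, ← lie_skew _ (E (0, 0)), hTe1]
    simp only [hSc]
    rw [hαb b, hμ b]
    module
  have hzero : ∀ (j : ℕ) (b : ℤ), D₂ (E (b, j)) = 0 := by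
    intro j
    induction j using Nat.strong_induction_on with
    | _ j ih =>
      match j with
      | 0 => exact hD₂0
      | 1 => exact hD₂1
      | (j + 2) =>
        intro b
        set a : ℤ := if b = 2 then 0 else 1 with ha
        have hane : b - a ≠ a := by
          by_cases hb : b = 2 <;> simp [ha, hb] <;> omega
        have hbrj := hbr a 1 (b - a) (j + 1)
        have e0 : a + (b - a) = b := by ring
        have e1 : 1 + (j + 1) = j + 2 := by omega
        have e2 : 1 + (j + 1) - 1 = j + 1 := by omega
        rw [e0, e2, e1] at hbrj
        have h1 : D₂ ⁅E (a, 1), E (b - a, j + 1)⁆ = 0 := by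
          rw [D₂.apply_lie_eq_add, ih (j + 1) (by omega), ih 1 (by omega), lie_zero, zero_lie,
            add_zero]
        rw [hbrj, map_add, map_smul, map_smul, ih (j + 1) (by omega), smul_zero, add_zero] at h1
        have h2 := smul_eq_zero.1 h1
        rcases h2 with h2 | h2
        · rw [sub_eq_zero] at h2
          exact absurd (hg h2.symm).symm hane
        · exact h2
  have hD₂zero : ∀ x : W, D₂ x = 0 := by
    have hmaps : (D₂ : W →ₗ[F] W) = 0 := by
      apply E.ext
      intro p
      simpa using hzero p.2 p.1
    intro x
    have := LinearMap.congr_fun hmaps x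
    simpa using this
  refine ⟨u + mu • E (0, 0), S, fun a i => ⟨Sc a, (hSapply _).trans (hSlinE (a, i))⟩, fun x => ?_⟩
  have h0 := hD₂zero x
  rw [hD₂apply, hD₁apply] at h0
  have : D x = -⁅x, u⁆ - mu • ⁅x, E (0, 0)⁆ + Slin x := by
    linear_combination (norm := module) h0
  rw [this, hSapply, add_lie, smul_lie, ← lie_skew u x, ← lie_skew (E (0, 0)) x]
  module
end

section
/- For any nonzero element l of W(g,1) with g injective, the ideal generated by l contains a nonzero element all of whose lower indices (appearing with nonzero coefficient in the basis expansion) are positive. -/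
theorem ideal_contains_positive_lower_indices (F : Type*) [Field F] [CharZero F]
    (g : ℤ →+ F) (hg : Function.Injective g)
    (W : Type*) [LieRing W] [LieAlgebra F W] (E : Module.Basis (ℤ × ℤ) F W)
    (hbr : ∀ a i b j : ℤ, ⁅E (a, i), E (b, j)⁆ =
      (g b - g a) • E (a + b, i + j) + ((j - i : ℤ) : F) • E (a + b, i + j - 1))
    (l : W) (hl : l ≠ 0) :
    ∃ m ∈ LieSubmodule.lieSpan F W ({l} : Set W), m ≠ 0 ∧
      ∀ p ∈ (E.repr m).support, 0 < p.2 := by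
  classical
  set f : (ℤ × ℤ) →₀ F := E.repr l with hf
  have hfne : f ≠ 0 := by
    intro h
    apply hl
    have := congrArg E.repr.symm (hf ▸ h)
    simpa using this
  have hs : f.support.Nonempty := Finsupp.support_nonempty_iff.mpr hfne
  set s := f.support with hsdef
  have hsne : (s.image Prod.snd).Nonempty := hs.image _
  set i₀ := (s.image Prod.snd).max' hsne with hi₀
  set i₁ := (s.image Prod.snd).min' hsne with hi₁
  obtain ⟨p₀, hp₀s, hp₀⟩ := Finset.mem_image.mp ((s.image Prod.snd).max'_mem hsne)
  have hmax : ∀ p ∈ s, p.2 ≤ i₀ := fun p hp =>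
    Finset.le_max' _ _ (Finset.mem_image_of_mem _ hp)
  have hmin : ∀ p ∈ s, i₁ ≤ p.2 := fun p hp =>
    Finset.min'_le _ _ (Finset.mem_image_of_mem _ hp)
  set a₀ := p₀.1 with ha₀
  set b := a₀ + 1 with hb
  set j := 2 - i₁ with hj
  set m := ⁅E (b, j), l⁆ with hm
  have hmem : m ∈ LieSubmodule.lieSpan F W ({l} : Set W) :=
    LieSubmodule.lie_mem _ (LieSubmodule.subset_lieSpan (Set.mem_singleton l))
  -- express l as a sum over the support
  have hlr : l = ∑ p ∈ s, f p • E p := by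
    conv_lhs => rw [← E.linearCombination_repr l]
    rw [Finsupp.linearCombination_apply, Finsupp.sum]
  have hbr' : ∀ p : ℤ × ℤ, ⁅E (b, j), E p⁆ =
      (g p.1 - g b) • E (b + p.1, j + p.2) + ((p.2 - j : ℤ) : F) • E (b + p.1, j + p.2 - 1) := by
    intro p
    exact hbr b j p.1 p.2
  have hmsum : m = ∑ p ∈ s, f p •
      ((g p.1 - g b) • E (b + p.1, j + p.2)
        + ((p.2 - j : ℤ) : F) • E (b + p.1, j + p.2 - 1)) := by
    rw [hm]
    conv_lhs => rw [hlr]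
    rw [show ⁅E (b, j), ∑ p ∈ s, f p • E p⁆ = ∑ p ∈ s, ⁅E (b, j), f p • E p⁆ by
      simpa only [LieAlgebra.ad_apply] using
        map_sum (LieAlgebra.ad F W (E (b, j))) (fun p => f p • E p) s]
    refine Finset.sum_congr rfl fun p hp => ?_
    rw [lie_smul, hbr' p]
  have hrepr : E.repr m = ∑ p ∈ s,
      (Finsupp.single (b + p.1, j + p.2) (f p * (g p.1 - g b))
        + Finsupp.single (b + p.1, j + p.2 - 1) (f p * ((p.2 - j : ℤ) : F))) := by
    rw [hmsum, map_sum]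
    refine Finset.sum_congr rfl fun p hp => ?_
    simp only [map_add, map_smul, Module.Basis.repr_self, smul_add, smul_smul, Finsupp.smul_single, smul_eq_mul, mul_one]
  refine ⟨m, hmem, ?_, ?_⟩
  · -- nonzero: coefficient at (b + a₀, j + i₀)
    intro hmz
    have h0 : (E.repr m) (b + a₀, j + i₀) = 0 := by rw [hmz]; simp
    rw [hrepr, Finset.sum_apply'] at h0
    rw [Finset.sum_eq_single_of_mem p₀ hp₀s ?_] at h0
    · have hfp : f p₀ ≠ 0 := Finsupp.mem_support_iff.mp hp₀s
      have hgne : g p₀.1 - g b ≠ 0 := sub_ne_zero.mpr (fun h => by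
        have := hg h
        omega)
      have : (Finsupp.single (b + p₀.1, j + p₀.2) (f p₀ * (g p₀.1 - g b))
          + Finsupp.single (b + p₀.1, j + p₀.2 - 1) (f p₀ * ((p₀.2 - j : ℤ) : F)))
            (b + a₀, j + i₀) = f p₀ * (g p₀.1 - g b) := by
        have hk1 : ((b + p₀.1, j + p₀.2) : ℤ × ℤ) = (b + a₀, j + i₀) := by
          simp [ha₀, hp₀, hi₀]
        have hk2 : ((b + p₀.1, j + p₀.2 - 1) : ℤ × ℤ) ≠ (b + a₀, j + i₀) := by
          intro h
          rw [Prod.mk.injEq] at h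
          omega
        rw [Finsupp.add_apply, Finsupp.single_apply, Finsupp.single_apply, if_pos hk1,
          if_neg hk2, add_zero]
      rw [this] at h0
      exact (mul_ne_zero hfp hgne) h0
    · intro p hp hne
      have h1 : ((b + p.1, j + p.2) : ℤ × ℤ) ≠ (b + a₀, j + i₀) := by
        intro h
        rw [Prod.mk.injEq] at h
        exact hne (Prod.ext (by omega) (by omega))
      have h2 : ((b + p.1, j + p.2 - 1) : ℤ × ℤ) ≠ (b + a₀, j + i₀) := by
        intro h
        rw [Prod.mk.injEq] at h
        have := hmax p hp
        omega
      rw [Finsupp.add_apply, Finsupp.single_apply, Finsupp.single_apply, if_neg h1,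
        if_neg h2, add_zero]
  · intro q hq
    by_contra hq2
    push_neg at hq2
    have hz : (E.repr m) q = 0 := by
      rw [hrepr, Finset.sum_apply']
      refine Finset.sum_eq_zero fun p hp => ?_
      have hmi := hmin p hp
      have h1 : ((b + p.1, j + p.2) : ℤ × ℤ) ≠ q := by
        intro h
        have := congrArg Prod.snd h
        simp only at this
        omega
      have h2 : ((b + p.1, j + p.2 - 1) : ℤ × ℤ) ≠ q := by
        intro h
        have := congrArg Prod.snd h
        simp only at this
        omega
      rw [Finsupp.add_apply, Finsupp.single_apply, Finsupp.single_apply, if_neg h1,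
        if_neg h2, add_zero]
    exact Finsupp.mem_support_iff.mp hq hz
end
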